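/- arXiv:1607.01986 — 4 statements merged into one kernel-verified Lean document; each statement's English description precedes it below -/
import Mathlib

section
/- Let k ≥ 1 and d_D ≥ 1 be integers and Q, R_D ∈ ℂ[X] with Q(im) ≠ 0 and R_D(im) ≠ 0 for all m ∈ ℝ. For m ∈ ℝ set P_m(tau) = Q(im) − R_D(im)(k·tau^k)^{d_D}, which factors as P_m(tau) = −R_D(im)·k^{d_D}·∏_{l=0}^{k·d_D−1}(tau − q_l(m)) where q_l(m) = (|Q(im)|/(|R_D(im)| k^{d_D}))^{1/(k·d_D)} · exp( i( arg(Q(im)/(R_D(im) k^{d_D}))/(k·d_D) + 2π l/(k·d_D) ) ). Suppose D ⊆ ℂ is a set for which there exist M1, M2 > 0 and l0 ∈ {0,…,k·d_D−1} such that |tau − q_l(m)| ≥ M1(1+|tau|) for all 0 ≤ l ≤ k·d_D−1, all m ∈ ℝ and all tau ∈ D, and |tau − q_{l0}(m)| ≥ M2 |q_{l0}(m)| for all m ∈ ℝ and tau ∈ D. Then for all tau ∈ D and m ∈ ℝ: |P_m(tau)| ≥ M1^{k·d_D−1} M2 |R_D(im)| k^{d_D} (|Q(im)|/(|R_D(im)|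 k^{d_D}))^{1/(k·d_D)} (1+|tau|)^{k·d_D−1}. In particular, if moreover |Q(im)/R_D(im)| ≥ r > 0 for all m ∈ ℝ, then |P_m(tau)| ≥ C_P · r^{1/(k·d_D)} |R_D(im)| (1+|tau|)^{k·d_D−1} with C_P = M1^{k·d_D−1} M2 k^{d_D} (k^{d_D})^{−1/(k·d_D)}. -/
/- Statement 1: lower bounds for the polynomial P_m(tau) = Q(im) - R_D(im)(k tau^k)^{d_D}
in terms of its roots. -/

/-- The roots `q_l(m)` of `P_m(tau) = Q(im) - R_D(im)(k tau^k)^{d_D}`. -/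
noncomputable def rootQ (Q RD : Polynomial ℂ) (k dD : ℕ) (l : ℕ) (m : ℝ) : ℂ :=
  (((‖Q.eval (Complex.I * m)‖ / (‖RD.eval (Complex.I * m)‖ * (k : ℝ) ^ dD))
      ^ (1 / (k * dD : ℝ)) : ℝ) : ℂ) *
    Complex.exp (Complex.I *
      (((Complex.arg (Q.eval (Complex.I * m) / (RD.eval (Complex.I * m) * (k : ℂ) ^ dD))
          / (k * dD : ℝ) + 2 * Real.pi * l / (k * dD : ℝ) : ℝ) : ℂ)))

theorem stmt_1 (k dD : ℕ) (hk : 1 ≤ k) (hdD : 1 ≤ dD)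
    (Q RD : Polynomial ℂ)
    (hQ : ∀ m : ℝ, Q.eval (Complex.I * m) ≠ 0)
    (hRD : ∀ m : ℝ, RD.eval (Complex.I * m) ≠ 0)
    (Dset : Set ℂ) (M1 M2 : ℝ) (hM1 : 0 < M1) (hM2 : 0 < M2)
    (l0 : ℕ) (hl0 : l0 < k * dD)
    (h1 : ∀ l < k * dD, ∀ m : ℝ, ∀ tau ∈ Dset,
      M1 * (1 + ‖tau‖) ≤ ‖tau - rootQ Q RD k dD l m‖)
    (h2 : ∀ m : ℝ, ∀ tau ∈ Dset,
      M2 * ‖rootQ Q RD k dD l0 m‖ ≤ ‖tau - rootQ Q RD k dD l0 m‖) :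
    (∀ tau ∈ Dset, ∀ m : ℝ,
      M1 ^ (k * dD - 1) * M2 * ‖RD.eval (Complex.I * m)‖ * (k : ℝ) ^ dD *
          (‖Q.eval (Complex.I * m)‖ / (‖RD.eval (Complex.I * m)‖ * (k : ℝ) ^ dD))
            ^ (1 / (k * dD : ℝ)) *
          (1 + ‖tau‖) ^ (k * dD - 1)
        ≤ ‖Q.eval (Complex.I * m) - RD.eval (Complex.I * m) * ((k : ℂ) * tau ^ k) ^ dD‖) ∧
    (∀ r : ℝ, 0 < r →
      (∀ m : ℝ, r ≤ ‖Q.eval (Complex.I * m) / RD.eval (Complex.I * m)‖) →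
      ∀ tau ∈ Dset, ∀ m : ℝ,
        (M1 ^ (k * dD - 1) * M2 * (k : ℝ) ^ dD * ((k : ℝ) ^ dD) ^ (-(1 / (k * dD : ℝ)))) *
            r ^ (1 / (k * dD : ℝ)) * ‖RD.eval (Complex.I * m)‖ * (1 + ‖tau‖) ^ (k * dD - 1)
          ≤ ‖Q.eval (Complex.I * m) - RD.eval (Complex.I * m) * ((k : ℂ) * tau ^ k) ^ dD‖) := by
  have hn0 : 0 < k * dD := Nat.mul_pos hk hdD
  have hnR : (0:ℝ) < ((k*dD : ℕ):ℝ) := by exact_mod_cast hn0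
  have hprod : ∀ m : ℝ, ∀ tau : ℂ,
      Q.eval (Complex.I * m) - RD.eval (Complex.I * m) * ((k : ℂ) * tau ^ k) ^ dD
        = -(RD.eval (Complex.I * m) * (k:ℂ)^dD) *
            ∏ l ∈ Finset.range (k*dD), (tau - rootQ Q RD k dD l m) := by
    intro m tau
    set A := Q.eval (Complex.I * m) with hA
    set B := RD.eval (Complex.I * m) with hB
    have hA0 := hQ m
    have hB0 := hRD m
    have hkC : ((k:ℂ))^dD ≠ 0 := pow_ne_zero _ (Nat.cast_ne_zero.2 (by omega))
    have hBk : B * (k:ℂ)^dD ≠ 0 := mul_ne_zero hB0 hkC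
    set c := A / (B * (k:ℂ)^dD) with hc
    have hc0 : c ≠ 0 := div_ne_zero hA0 hBk
    set ρ := ‖A‖ / (‖B‖ * (k:ℝ)^dD) with hρ
    have hρ0 : 0 < ρ := by
      have h1 := norm_pos_iff.mpr hA0
      have h2 := norm_pos_iff.mpr hB0
      have h3 : (0:ℝ) < (k:ℝ)^dD := by positivity
      positivity
    have habs : ‖c‖ = ρ := by
      simp only [hc, hρ, norm_div, norm_mul, norm_pow, Complex.norm_natCast]
    set ζ := Complex.exp (2 * Real.pi * Complex.I / ((k*dD:ℕ):ℂ)) with hζdef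
    have hζ : IsPrimitiveRoot ζ (k*dD) := Complex.isPrimitiveRoot_exp _ (by omega)
    have hneC : ((k:ℂ)*(dD:ℂ)) ≠ 0 := by
      have h : ((k*dD:ℕ):ℂ) ≠ 0 := Nat.cast_ne_zero.2 (by omega)
      push_cast at h; exact h
    have hql : ∀ l : ℕ, rootQ Q RD k dD l m = ζ ^ l * rootQ Q RD k dD 0 m := by
      intro l
      unfold rootQ
      rw [← hA, ← hB, ← hc, hζdef, ← Complex.exp_nat_mul]
      have hexp : Complex.I * ((c.arg / ((k:ℝ)*(dD:ℝ)) + 2*Real.pi*(l:ℝ)/((k:ℝ)*(dD:ℝ)) : ℝ):ℂ)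
          = (l:ℂ) * (2 * Real.pi * Complex.I / ((k*dD:ℕ):ℂ))
            + Complex.I * ((c.arg / ((k:ℝ)*(dD:ℝ)) + 2*Real.pi*((0:ℕ):ℝ)/((k:ℝ)*(dD:ℝ)) : ℝ):ℂ) := by
        push_cast
        field_simp
        ring
      rw [hexp, Complex.exp_add]
      push_cast
      ring
    have hrpow : (ρ ^ (1 / ((k:ℝ)*(dD:ℝ)))) ^ (k*dD) = ρ := by
      rw [← Real.rpow_natCast (ρ ^ _) (k*dD), ← Real.rpow_mul hρ0.le]
      rw [show (1 / ((k:ℝ)*(dD:ℝ))) * ((k*dD : ℕ):ℝ) = 1 by push_cast; field_simp]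
      exact Real.rpow_one ρ
    have e : rootQ Q RD k dD 0 m ^ (k*dD) = c := by
      unfold rootQ
      rw [← hA, ← hB, ← hc, ← hρ, mul_pow, ← Complex.exp_nat_mul,
        show (((ρ ^ (1 / ((k:ℝ)*(dD:ℝ))) : ℝ):ℂ))^(k*dD) = (ρ:ℂ) by
          rw [← Complex.ofReal_pow, hrpow]]
      rw [show ((k*dD : ℕ):ℂ) * (Complex.I *
            ((c.arg / ((k:ℝ)*(dD:ℝ)) + 2*Real.pi*((0:ℕ):ℝ)/((k:ℝ)*(dD:ℝ)) : ℝ):ℂ))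
          = (c.arg:ℂ) * Complex.I by push_cast; field_simp [left_ne_zero_of_mul hneC, right_ne_zero_of_mul hneC]; ring]
      rw [← habs, Complex.norm_mul_exp_arg_mul_I]
    have hfac : tau ^ (k*dD) - c
        = ∏ l ∈ Finset.range (k*dD), (tau - ζ ^ l * rootQ Q RD k dD 0 m) := by
      have hx := X_pow_sub_C_eq_prod hζ hn0 e
      have hx2 := congrArg (Polynomial.eval tau) hx
      simpa [Polynomial.eval_prod] using hx2
    have hrw : ∀ l ∈ Finset.range (k*dD),
        tau - rootQ Q RD k dD l m = tau - ζ ^ l * rootQ Q RD k dD 0 m := by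
      intro l _; rw [hql l]
    rw [Finset.prod_congr rfl hrw, ← hfac]
    rw [hc]
    field_simp [show B ≠ 0 from hB0]
    ring
  have hnorm_root : ∀ m : ℝ, ∀ l : ℕ, ‖rootQ Q RD k dD l m‖
      = (‖Q.eval (Complex.I * m)‖ / (‖RD.eval (Complex.I * m)‖ * (k : ℝ) ^ dD)) ^ (1 / ((k:ℝ) * dD)) := by
    intro m l
    have hA0 := hQ m
    have hB0 := hRD m
    have hρ0 : 0 < ‖Q.eval (Complex.I * m)‖ / (‖RD.eval (Complex.I * m)‖ * (k : ℝ) ^ dD) := by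
      have h1 := norm_pos_iff.mpr hA0
      have h2 := norm_pos_iff.mpr hB0
      have h3 : (0:ℝ) < (k:ℝ)^dD := by positivity
      positivity
    have hone : ∀ x : ℝ, ‖Complex.exp (Complex.I * (x:ℂ))‖ = 1 := by
      intro x
      rw [mul_comm, Complex.norm_exp_ofReal_mul_I]
    rw [rootQ, norm_mul, hone, Complex.norm_real, Real.norm_eq_abs,
      abs_of_nonneg (Real.rpow_nonneg hρ0.le _), mul_one]
  have part1 : ∀ tau ∈ Dset, ∀ m : ℝ,
      M1 ^ (k * dD - 1) * M2 * ‖RD.eval (Complex.I * m)‖ * (k : ℝ) ^ dD *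
          (‖Q.eval (Complex.I * m)‖ / (‖RD.eval (Complex.I * m)‖ * (k : ℝ) ^ dD))
            ^ (1 / (k * dD : ℝ)) *
          (1 + ‖tau‖) ^ (k * dD - 1)
        ≤ ‖Q.eval (Complex.I * m) - RD.eval (Complex.I * m) * ((k : ℂ) * tau ^ k) ^ dD‖ := by
    intro tau htau m
    have hA0 := hQ m
    have hB0 := hRD m
    set ρ' := (‖Q.eval (Complex.I * m)‖ / (‖RD.eval (Complex.I * m)‖ * (k : ℝ) ^ dD)) ^ (1 / ((k:ℝ) * dD)) with hρ'
    have hρ'0 : (0:ℝ) ≤ ρ' := by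
      apply Real.rpow_nonneg
      positivity
    have htau0 : (0:ℝ) ≤ 1 + ‖tau‖ := by positivity
    rw [hprod m tau, norm_mul, norm_neg, norm_mul, norm_pow, Complex.norm_natCast,
      norm_prod]
    have hmem : l0 ∈ Finset.range (k*dD) := Finset.mem_range.2 hl0
    rw [← Finset.mul_prod_erase _ _ hmem]
    have hbd1 : (M1 * (1 + ‖tau‖)) ^ (k*dD - 1)
        ≤ ∏ l ∈ (Finset.range (k*dD)).erase l0, ‖tau - rootQ Q RD k dD l m‖ := by
      have hcard : ((Finset.range (k*dD)).erase l0).card = k*dD - 1 := by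
        rw [Finset.card_erase_of_mem hmem, Finset.card_range]
      calc (M1 * (1 + ‖tau‖)) ^ (k*dD - 1)
          = ∏ _l ∈ (Finset.range (k*dD)).erase l0, (M1 * (1 + ‖tau‖)) := by
            rw [Finset.prod_const, hcard]
        _ ≤ _ := by
            apply Finset.prod_le_prod
            · intro i _; positivity
            · intro i hi
              exact h1 i (Finset.mem_range.1 (Finset.mem_of_mem_erase hi)) m tau htau
    have hbd2 : M2 * ρ' ≤ ‖tau - rootQ Q RD k dD l0 m‖ := by
      have h := h2 m tau htau
      rwa [hnorm_root m l0, ← hρ'] at h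
    have hBpos : (0:ℝ) < ‖RD.eval (Complex.I * m)‖ := norm_pos_iff.mpr hB0
    have hkpos : (0:ℝ) < (k:ℝ)^dD := by positivity
    calc M1 ^ (k * dD - 1) * M2 * ‖RD.eval (Complex.I * m)‖ * (k : ℝ) ^ dD * ρ' * (1 + ‖tau‖) ^ (k * dD - 1)
        = ‖RD.eval (Complex.I * m)‖ * (k:ℝ)^dD * ((M2 * ρ') * (M1 * (1 + ‖tau‖)) ^ (k*dD - 1)) := by
          rw [mul_pow]; ring
      _ ≤ ‖RD.eval (Complex.I * m)‖ * (k:ℝ)^dD *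
            (‖tau - rootQ Q RD k dD l0 m‖ * ∏ l ∈ (Finset.range (k*dD)).erase l0, ‖tau - rootQ Q RD k dD l m‖) := by
          apply mul_le_mul_of_nonneg_left _ (by positivity)
          apply mul_le_mul hbd2 hbd1 (by positivity) (norm_nonneg _)
  refine ⟨part1, ?_⟩
  intro r hr hrle tau htau m
  refine le_trans ?_ (part1 tau htau m)
  have hB0 := hRD m
  have hBpos : (0:ℝ) < ‖RD.eval (Complex.I * m)‖ := norm_pos_iff.mpr hB0
  have hkpos : (0:ℝ) < (k:ℝ)^dD := by positivity
  have hrle' : r ≤ ‖Q.eval (Complex.I * m)‖ / ‖RD.eval (Complex.I * m)‖ := by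
    have h := hrle m
    rwa [norm_div] at h
  have hsplit : (‖Q.eval (Complex.I * m)‖ / (‖RD.eval (Complex.I * m)‖ * (k : ℝ) ^ dD)) ^ (1 / ((k:ℝ) * dD))
      = (‖Q.eval (Complex.I * m)‖ / ‖RD.eval (Complex.I * m)‖) ^ (1 / ((k:ℝ) * dD)) *
        ((k:ℝ)^dD) ^ (-(1 / ((k:ℝ) * dD))) := by
    rw [div_mul_eq_div_div, Real.div_rpow (by positivity) hkpos.le, Real.rpow_neg hkpos.le,
      div_eq_mul_inv]
  rw [hsplit]
  have hmono : r ^ (1 / ((k:ℝ) * dD)) ≤ (‖Q.eval (Complex.I * m)‖ / ‖RD.eval (Complex.I * m)‖) ^ (1 / ((k:ℝ) * dD)) := by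
    apply Real.rpow_le_rpow hr.le hrle'
    positivity
  calc M1 ^ (k * dD - 1) * M2 * (k : ℝ) ^ dD * ((k : ℝ) ^ dD) ^ (-(1 / ((k:ℝ) * dD))) *
          r ^ (1 / ((k:ℝ) * dD)) * ‖RD.eval (Complex.I * m)‖ * (1 + ‖tau‖) ^ (k * dD - 1)
      = (M1 ^ (k * dD - 1) * M2 * (k : ℝ) ^ dD * ((k : ℝ) ^ dD) ^ (-(1 / ((k:ℝ) * dD))) *
          ‖RD.eval (Complex.I * m)‖ * (1 + ‖tau‖) ^ (k * dD - 1)) * r ^ (1 / ((k:ℝ) * dD)) := by ring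
    _ ≤ (M1 ^ (k * dD - 1) * M2 * (k : ℝ) ^ dD * ((k : ℝ) ^ dD) ^ (-(1 / ((k:ℝ) * dD))) *
          ‖RD.eval (Complex.I * m)‖ * (1 + ‖tau‖) ^ (k * dD - 1)) *
          (‖Q.eval (Complex.I * m)‖ / ‖RD.eval (Complex.I * m)‖) ^ (1 / ((k:ℝ) * dD)) := by
        apply mul_le_mul_of_nonneg_left hmono
        have h1' : (0:ℝ) ≤ ((k : ℝ) ^ dD) ^ (-(1 / ((k:ℝ) * dD))) := Real.rpow_nonneg hkpos.le _
        positivity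
    _ = _ := by ring
end

section
/- Let nu, beta, mu > 0, let k ≥ 1 be an integer and let Omega ⊆ ℂ be a nonempty open set whose closure cl(Omega) is starshaped with respect to 0. Let Q, R ∈ ℂ[X] with deg(R) ≥ deg(Q) and R(im) ≠ 0 for all m ∈ ℝ, and assume mu > deg(Q) + 1. Let b : ℝ → ℂ be continuous with |b(m)| ≤ 1/|R(im)| for all m ∈ ℝ. Then there exists a constant E3 > 0 (depending on Q, R, mu, k, nu) such that for every f ∈ E_{(beta,mu)} and every g ∈ F_{(nu,beta,mu,k);cl(Omega)}: || b(m) ∫_0^{tau^k} (tau^k − s)^{1/k} ( ∫_ℝ f(m−m1) Q(i·m1) g(s^{1/k}, m1) dm1 ) ds/s ||_{(nu,beta,mu,k);cl(Omega)} ≤ E3 ||f||_{(beta,mu)} ||g||_{(nu,beta,mu,k);cl(Omega)}, where the inner path integral is along the segment from 0 to tau^k (s = (t·tau)^k, s^{1/k} = t·tau, t ∈ [0,1]). -/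
open MeasureTheory

lemma alg1 {x t A B D X kk : ℝ} (hx : x ≠ 0) (ht : t ≠ 0) (hD : 1 + D ≠ 0) :
    (1+X)/x * (A * (t*x/(1+D) * B) * kk / t) = kk * (A*B*(1+X))/(1+D) := by
  field_simp


lemma poly_upper (Q : Polynomial ℂ) : ∃ c : ℝ, 0 < c ∧ ∀ m : ℝ,
    ‖Q.eval (Complex.I * m)‖ ≤ c * (1 + |m|) ^ Q.natDegree := by
  have hs : 0 ≤ ∑ j ∈ Finset.range (Q.natDegree + 1), ‖Q.coeff j‖ :=
    Finset.sum_nonneg fun j _ => norm_nonneg _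
  refine ⟨(∑ j ∈ Finset.range (Q.natDegree + 1), ‖Q.coeff j‖) + 1, by linarith, fun m => ?_⟩
  have hbase : (1:ℝ) ≤ 1 + |m| := le_add_of_nonneg_right (abs_nonneg m)
  rw [Polynomial.eval_eq_sum_range]
  calc ‖∑ j ∈ Finset.range (Q.natDegree + 1), Q.coeff j * (Complex.I * m) ^ j‖
      ≤ ∑ j ∈ Finset.range (Q.natDegree + 1), ‖Q.coeff j * (Complex.I * m) ^ j‖ :=
        norm_sum_le _ _
    _ ≤ ∑ j ∈ Finset.range (Q.natDegree + 1), ‖Q.coeff j‖ * (1 + |m|) ^ Q.natDegree := by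
        refine Finset.sum_le_sum fun j hj => ?_
        rw [norm_mul, norm_pow]
        have h1 : ‖Complex.I * (m:ℂ)‖ ≤ 1 + |m| := by
          simp [Complex.norm_real]
        have h2 : ‖Complex.I * (m:ℂ)‖ ^ j ≤ (1 + |m|) ^ j :=
          pow_le_pow_left₀ (norm_nonneg _) h1 j
        have h3 : (1 + |m|) ^ j ≤ (1 + |m|) ^ Q.natDegree :=
          pow_le_pow_right₀ hbase (by simp at hj; omega)
        exact mul_le_mul_of_nonneg_left (h2.trans h3) (norm_nonneg _)
    _ ≤ _ := by
        rw [← Finset.sum_mul]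
        have : (0:ℝ) < (1 + |m|) ^ Q.natDegree := by positivity
        nlinarith


lemma poly_lower (R : Polynomial ℂ) (hR : ∀ m : ℝ, R.eval (Complex.I * m) ≠ 0) :
    ∃ c : ℝ, 0 < c ∧ ∀ m : ℝ, c * (1 + |m|) ^ R.natDegree ≤ ‖R.eval (Complex.I * m)‖ := by
  set d := R.natDegree with hd
  have hR0 : R ≠ 0 := fun h => hR 0 (by simp [h])
  set L : ℝ := ‖R.coeff d‖ with hL
  have hLpos : 0 < L := by
    have : R.leadingCoeff ≠ 0 := Polynomial.leadingCoeff_ne_zero.mpr hR0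
    exact norm_pos_iff.mpr this
  set S : ℝ := ∑ j ∈ Finset.range d, ‖R.coeff j‖ with hS
  have hSnn : 0 ≤ S := Finset.sum_nonneg fun j _ => norm_nonneg _
  set M : ℝ := max 1 (2 * S / L) with hM
  have hM1 : (1:ℝ) ≤ M := le_max_left _ _
  -- step 1: large |m|
  have hlarge : ∀ m : ℝ, M ≤ |m| →
      (L / 2 / 2 ^ d) * (1 + |m|) ^ d ≤ ‖R.eval (Complex.I * m)‖ := by
    intro m hm
    have hm1 : (1:ℝ) ≤ |m| := hM1.trans hm
    have habs : ‖Complex.I * (m:ℂ)‖ = |m| := by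
      simp [Complex.norm_real]
    have heval : R.eval (Complex.I * m) =
        (∑ j ∈ Finset.range d, R.coeff j * (Complex.I * m) ^ j)
          + R.coeff d * (Complex.I * m) ^ d := by
      rw [Polynomial.eval_eq_sum_range, Finset.sum_range_succ]
    have hTle : ‖∑ j ∈ Finset.range d, R.coeff j * (Complex.I * m) ^ j‖
        ≤ L / 2 * |m| ^ d := by
      calc ‖∑ j ∈ Finset.range d, R.coeff j * (Complex.I * m) ^ j‖
          ≤ ∑ j ∈ Finset.range d, ‖R.coeff j‖ * |m| ^ j := by
            refine (norm_sum_le _ _).trans (Finset.sum_le_sum fun j hj => ?_)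
            rw [norm_mul, norm_pow, habs]
        _ ≤ L / 2 * |m| ^ d := by
            rcases Nat.eq_zero_or_pos d with h0 | hdpos
            · simp [h0]; positivity
            · have hstep : ∀ j ∈ Finset.range d, ‖R.coeff j‖ * |m| ^ j
                  ≤ ‖R.coeff j‖ * |m| ^ (d - 1) := by
                intro j hj
                exact mul_le_mul_of_nonneg_left
                  (pow_le_pow_right₀ hm1 (by simp at hj; omega)) (norm_nonneg _)
              calc ∑ j ∈ Finset.range d, ‖R.coeff j‖ * |m| ^ j
                  ≤ ∑ j ∈ Finset.range d, ‖R.coeff j‖ * |m| ^ (d-1) :=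
                    Finset.sum_le_sum hstep
                _ = S * |m| ^ (d-1) := by rw [← Finset.sum_mul]
                _ ≤ (L / 2 * |m|) * |m| ^ (d-1) := by
                    have h2 : 2 * S / L ≤ |m| := (le_max_right _ _).trans hm
                    have : 2 * S ≤ L * |m| := by
                      rw [div_le_iff₀ hLpos] at h2; linarith
                    have hpnn : (0:ℝ) ≤ |m| ^ (d-1) := by positivity
                    nlinarith
                _ = L / 2 * |m| ^ d := by
                    rw [mul_assoc, ← pow_succ']
                    congr 2
                    omega
    have hlead : ‖R.coeff d * (Complex.I * m) ^ d‖ = L * |m| ^ d := by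
      rw [norm_mul, norm_pow, habs]
    have h1 : L * |m| ^ d - L / 2 * |m| ^ d ≤ ‖R.eval (Complex.I * m)‖ := by
      have := norm_sub_le (((∑ j ∈ Finset.range d, R.coeff j * (Complex.I * m) ^ j)
          + R.coeff d * (Complex.I * m) ^ d))
          (∑ j ∈ Finset.range d, R.coeff j * (Complex.I * m) ^ j)
      simp only [add_sub_cancel_left] at this
      rw [heval, hlead] at *
      linarith
    have h2 : (1 + |m|) ^ d ≤ 2 ^ d * |m| ^ d := by
      rw [← mul_pow]
      exact pow_le_pow_left₀ (by positivity) (by linarith) d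
    have h2d : (0:ℝ) < 2 ^ d := by positivity
    calc (L / 2 / 2 ^ d) * (1 + |m|) ^ d ≤ (L / 2 / 2 ^ d) * (2 ^ d * |m| ^ d) := by
          apply mul_le_mul_of_nonneg_left h2; positivity
      _ = L / 2 * |m| ^ d := by field_simp
      _ ≤ ‖R.eval (Complex.I * m)‖ := by linarith
  -- step 2: compact part
  have hcont : Continuous fun m : ℝ => ‖R.eval (Complex.I * m)‖ / (1 + |m|) ^ d := by
    apply Continuous.div
    · exact (R.continuous.comp (by continuity)).norm
    · continuity
    · intro m; positivity
  obtain ⟨m0, hm0mem, hm0⟩ := isCompact_Icc.exists_isMinOn (α := ℝ)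
    (s := Set.Icc (-M) M) ⟨0, by constructor <;> linarith⟩ hcont.continuousOn
  have hφ0 : 0 < ‖R.eval (Complex.I * m0)‖ / (1 + |m0|) ^ d := by
    exact div_pos (norm_pos_iff.mpr (hR m0)) (by positivity)
  refine ⟨min (L / 2 / 2 ^ d) (‖R.eval (Complex.I * m0)‖ / (1 + |m0|) ^ d),
    lt_min (by positivity) hφ0, fun m => ?_⟩
  rcases le_or_gt M |m| with hm | hm
  · exact le_trans (mul_le_mul_of_nonneg_right (min_le_left _ _) (by positivity))
      (hlarge m hm)
  · have hmem : m ∈ Set.Icc (-M) M := by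
      constructor <;> [linarith [neg_abs_le m]; linarith [le_abs_self m]]
    have := hm0 hmem
    simp only [Set.mem_setOf_eq] at this
    have hpow : (0:ℝ) < (1 + |m|) ^ d := by positivity
    calc min (L / 2 / 2 ^ d) (‖R.eval (Complex.I * m0)‖ / (1 + |m0|) ^ d) * (1 + |m|) ^ d
        ≤ (‖R.eval (Complex.I * m)‖ / (1 + |m|) ^ d) * (1 + |m|) ^ d := by
          apply mul_le_mul_of_nonneg_right _ hpow.le
          exact le_trans (min_le_right _ _) this
      _ = ‖R.eval (Complex.I * m)‖ := by field_simp


lemma mul_exp_neg_le {b y : ℝ} (hb : 0 < b) (hy : 0 ≤ y) :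
    y * Real.exp (-(b*y)) ≤ 1/b := by
  have h1 : b*y ≤ Real.exp (b*y) := by linarith [Real.add_one_le_exp (b*y)]
  have h2 : Real.exp (-(b*y)) = (Real.exp (b*y))⁻¹ := Real.exp_neg _
  have h3 : (0:ℝ) < Real.exp (b*y) := Real.exp_pos _
  rw [h2]
  rw [le_div_iff₀ hb]
  calc y * (Real.exp (b*y))⁻¹ * b = (b*y) * (Real.exp (b*y))⁻¹ := by ring
    _ ≤ Real.exp (b*y) * (Real.exp (b*y))⁻¹ := by
        apply mul_le_mul_of_nonneg_right h1 (by positivity)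
    _ = 1 := mul_inv_cancel₀ h3.ne'

lemma half_bound {a b p : ℝ} (ha : 0 ≤ a) (hb : 0 ≤ b) (h : (1+a)/2 ≤ 1+b) (hp : 0 ≤ p) :
    (1+b) ^ (-p) ≤ 2 ^ p * (1+a) ^ (-p) := by
  have h1 : ((1+a)/2) ^ p ≤ (1+b) ^ p := Real.rpow_le_rpow (by positivity) h hp
  have h2 : ((1+a)/2) ^ p = (1+a) ^ p / 2 ^ p := Real.div_rpow (by positivity) (by norm_num : (0:ℝ) ≤ 2) p
  have hap : (0:ℝ) < (1+a) ^ p := Real.rpow_pos_of_pos (by linarith) p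
  have hbp : (0:ℝ) < (1+b) ^ p := Real.rpow_pos_of_pos (by linarith) p
  have h2p : (0:ℝ) < 2 ^ p := Real.rpow_pos_of_pos (by norm_num) p
  rw [Real.rpow_neg (by linarith), Real.rpow_neg (by linarith)]
  rw [h2] at h1
  rw [inv_le_iff_one_le_mul₀' hbp]
  calc (1:ℝ) = ((1+a)^p) * ((1+a)^p)⁻¹ := (mul_inv_cancel₀ hap.ne').symm
    _ ≤ (2^p * (1+b)^p) * ((1+a)^p)⁻¹ := by
        apply mul_le_mul_of_nonneg_right _ (by positivity)
        rw [div_le_iff₀ h2p] at h1; linarith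
    _ = 2 ^ p * ((1+a)^p)⁻¹ * (1+b)^p := by ring
    _ ≤ (1+b)^p * (2 ^ p * ((1+a)^p)⁻¹) := le_of_eq (by ring)
  
lemma peetre {mu e : ℝ} (hmu : 0 < mu) (he : 0 < e) (hem : e ≤ mu) (m m1 : ℝ) :
    (1+|m-m1|) ^ (-mu) * (1+|m1|) ^ (-e) ≤
      2 ^ mu * (1+|m|) ^ (-mu) * (1+|m1|) ^ (-e)
      + 2 ^ mu * (1+|m|) ^ (-e) * (1+|m-m1|) ^ (-mu) := by
  have htri : |m| ≤ |m-m1| + |m1| := by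
    calc |m| = |(m-m1) + m1| := by ring_nf
      _ ≤ |m-m1| + |m1| := abs_add_le _ _
  have hA : (0:ℝ) ≤ (1+|m-m1|) ^ (-mu) := Real.rpow_nonneg (by positivity) _
  have hB : (0:ℝ) ≤ (1+|m1|) ^ (-e) := Real.rpow_nonneg (by positivity) _
  rcases le_or_gt (|m|/2) (|m-m1|) with h | h
  · have h1 : (1+|m-m1|) ^ (-mu) ≤ 2 ^ mu * (1+|m|) ^ (-mu) :=
      half_bound (abs_nonneg _) (abs_nonneg _) (by linarith) hmu.le
    have : (1+|m-m1|) ^ (-mu) * (1+|m1|) ^ (-e) ≤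
        2 ^ mu * (1+|m|) ^ (-mu) * (1+|m1|) ^ (-e) :=
      mul_le_mul_of_nonneg_right h1 hB
    have hnn : (0:ℝ) ≤ 2 ^ mu * (1+|m|) ^ (-e) * (1+|m-m1|) ^ (-mu) := by
      have := Real.rpow_nonneg (show (0:ℝ) ≤ 1+|m| by positivity) (-e)
      have := Real.rpow_nonneg (show (0:ℝ) ≤ (2:ℝ) by norm_num) mu
      positivity
    linarith
  · have h1 : (1+|m1|) ^ (-e) ≤ 2 ^ e * (1+|m|) ^ (-e) :=
      half_bound (abs_nonneg _) (abs_nonneg _) (by linarith) he.le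
    have h2 : (2:ℝ) ^ e ≤ 2 ^ mu := Real.rpow_le_rpow_of_exponent_le one_le_two hem
    have h1' : (1+|m1|) ^ (-e) ≤ 2 ^ mu * (1+|m|) ^ (-e) := by
      refine h1.trans (mul_le_mul_of_nonneg_right h2 ?_)
      exact Real.rpow_nonneg (by positivity) _
    have : (1+|m-m1|) ^ (-mu) * (1+|m1|) ^ (-e) ≤
        (1+|m-m1|) ^ (-mu) * (2 ^ mu * (1+|m|) ^ (-e)) :=
      mul_le_mul_of_nonneg_left h1' hA
    have hnn : (0:ℝ) ≤ 2 ^ mu * (1+|m|) ^ (-mu) * (1+|m1|) ^ (-e) := by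
      have := Real.rpow_nonneg (show (0:ℝ) ≤ 1+|m| by positivity) (-mu)
      have := Real.rpow_nonneg (show (0:ℝ) ≤ (2:ℝ) by norm_num) mu
      positivity
    nlinarith



lemma tau_est {nu : ℝ} (hnu : 0 < nu) {k : ℕ} (hk : 1 ≤ k) :
    ∃ C : ℝ, 0 < C ∧ ∀ x t : ℝ, 0 < x → 0 < t → t ≤ 1 →
      (1 + x^(2*k))/x * Real.exp (-(nu * x^k)) *
        (((1 - t^k) * x^k) ^ ((k:ℝ))⁻¹ *
          (t*x / (1 + (t*x)^(2*k)) * Real.exp (nu * (t*x)^k)) * k / t)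
        ≤ C := by
  refine ⟨k * ((1 + 2/nu) * ((4:ℝ)^k + 1 + 64/nu^2)), by positivity, fun x t hx ht ht1 => ?_⟩
  have hkR : (1:ℝ) ≤ (k:ℝ) := by exact_mod_cast hk
  set y : ℝ := (1 - t^k) * x^k with hy
  have htk1 : t^k ≤ 1 := pow_le_one₀ ht.le ht1
  have hy0 : 0 ≤ y := by
    have : (0:ℝ) ≤ x^k := by positivity
    have h1 : 0 ≤ 1 - t^k := by linarith
    positivity
  have hD1 : (0:ℝ) < 1 + (t*x)^(2*k) := by positivity
  have hD2 : (0:ℝ) < 1 + x^(2*k) := by positivity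
  -- claim 1
  have claim1 : y ^ ((k:ℝ))⁻¹ * Real.exp (-(nu/2 * y)) ≤ 1 + 2/nu := by
    have hroot : y ^ ((k:ℝ))⁻¹ ≤ 1 + y := by
      rcases le_or_gt y 1 with h | h
      · have := Real.rpow_le_one hy0 h (by positivity : (0:ℝ) ≤ ((k:ℝ))⁻¹)
        linarith
      · have h2 : y ^ ((k:ℝ))⁻¹ ≤ y ^ (1:ℝ) :=
          Real.rpow_le_rpow_of_exponent_le h.le (by
            rw [inv_le_one_iff₀]; right; linarith)
        rw [Real.rpow_one] at h2
        linarith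
    have hexp1 : Real.exp (-(nu/2 * y)) ≤ 1 := by
      rw [Real.exp_le_one_iff]
      nlinarith
    have hexp2 : y * Real.exp (-(nu/2 * y)) ≤ 2/nu := by
      calc y * Real.exp (-(nu/2 * y)) ≤ 1/(nu/2) :=
            mul_exp_neg_le (show (0:ℝ) < nu/2 by linarith) hy0
        _ = 2/nu := one_div_div _ _
    have hen : (0:ℝ) ≤ Real.exp (-(nu/2 * y)) := (Real.exp_pos _).le
    calc y ^ ((k:ℝ))⁻¹ * Real.exp (-(nu/2 * y)) ≤ (1+y) * Real.exp (-(nu/2 * y)) :=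
          mul_le_mul_of_nonneg_right hroot hen
      _ = Real.exp (-(nu/2 * y)) + y * Real.exp (-(nu/2 * y)) := by ring
      _ ≤ 1 + 2/nu := add_le_add hexp1 hexp2
  -- claim 2
  have claim2 : Real.exp (-(nu/2 * y)) * (1 + x^(2*k)) ≤
      ((4:ℝ)^k + 1 + 64/nu^2) * (1 + (t*x)^(2*k)) := by
    rcases le_or_gt (1/2 : ℝ) t with h | h
    · -- t ≥ 1/2 : ratio bounded by 4^k
      have h4 : (1:ℝ) ≤ (2*t)^(2*k) := one_le_pow₀ (by linarith)
      have hexp1 : Real.exp (-(nu/2 * y)) ≤ 1 := by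
        rw [Real.exp_le_one_iff]; nlinarith
      have hkey : (1 + x^(2*k)) ≤ (4:ℝ)^k * (1 + (t*x)^(2*k)) := by
        have e1 : (2*t)^(2*k) = (4:ℝ)^k * t^(2*k) := by
          rw [mul_pow]
          congr 1
          rw [pow_mul]; norm_num
        have e2 : (t*x)^(2*k) = t^(2*k) * x^(2*k) := mul_pow _ _ _
        have h5 : (1:ℝ) ≤ (4:ℝ)^k * t^(2*k) := by rw [← e1]; exact h4
        have hx2 : (0:ℝ) ≤ x^(2*k) := by positivity
        have h6 : x^(2*k) ≤ (4:ℝ)^k * t^(2*k) * x^(2*k) := by nlinarith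
        have h7 : (1:ℝ) ≤ (4:ℝ)^k := one_le_pow₀ (by norm_num)
        rw [e2]; nlinarith
      have h0 : (0:ℝ) ≤ 64/nu^2 := by positivity
      have h8 : (0:ℝ) < (4:ℝ)^k * (1 + (t*x)^(2*k)) := by positivity
      calc Real.exp (-(nu/2 * y)) * (1 + x^(2*k)) ≤ 1 * ((4:ℝ)^k * (1 + (t*x)^(2*k))) := by
            apply mul_le_mul hexp1 hkey (by positivity) (by norm_num)
        _ ≤ ((4:ℝ)^k + 1 + 64/nu^2) * (1 + (t*x)^(2*k)) := by nlinarith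
    · -- t < 1/2 : y ≥ x^k / 2
      have hhalf : t^k ≤ 1/2 := by
        calc t^k ≤ (1/2:ℝ)^k := pow_le_pow_left₀ ht.le h.le k
          _ ≤ (1/2:ℝ)^1 := pow_le_pow_of_le_one (by norm_num) (by norm_num) hk
          _ = 1/2 := pow_one _
      have hyx : x^k / 2 ≤ y := by
        rw [hy]
        have : (0:ℝ) ≤ x^k := by positivity
        nlinarith
      set r : ℝ := x^k with hr
      have hr0 : (0:ℝ) ≤ r := by positivity
      have hx2r : x^(2*k) = r^2 := by rw [hr, ← pow_mul, mul_comm]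
      have hexpmono : Real.exp (-(nu/2 * y)) ≤ Real.exp (-(nu/4 * r)) := by
        apply Real.exp_le_exp.mpr
        nlinarith
      have hsq : r^2 * Real.exp (-(nu/4 * r)) ≤ 64/nu^2 := by
        have hb : (0:ℝ) < nu/8 := by linarith
        have h1 := mul_exp_neg_le hb hr0
        have e1 : Real.exp (-(nu/4 * r)) = Real.exp (-(nu/8 * r)) * Real.exp (-(nu/8 * r)) := by
          rw [← Real.exp_add]; ring_nf
        have h2 : (0:ℝ) ≤ Real.exp (-(nu/8*r)) := (Real.exp_pos _).le
        have h3 : r * Real.exp (-(nu/8 * r)) ≤ 8/nu := by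
          calc r * Real.exp (-(nu/8 * r)) ≤ 1/(nu/8) := h1
            _ = 8/nu := one_div_div _ _
        calc r^2 * Real.exp (-(nu/4 * r))
            = (r * Real.exp (-(nu/8*r))) * (r * Real.exp (-(nu/8*r))) := by
              rw [e1]; ring
          _ ≤ (8/nu) * (8/nu) := by
              apply mul_le_mul h3 h3 (by positivity) (by positivity)
          _ = 64/nu^2 := by field_simp; ring
      have hexp1 : Real.exp (-(nu/4 * r)) ≤ 1 := by
        rw [Real.exp_le_one_iff]; nlinarith
      have h9 : (0:ℝ) ≤ (t*x)^(2*k) := by positivity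
      have h7 : (1:ℝ) ≤ (4:ℝ)^k := one_le_pow₀ (by norm_num)
      calc Real.exp (-(nu/2 * y)) * (1 + x^(2*k))
          ≤ Real.exp (-(nu/4 * r)) * (1 + r^2) := by
            rw [hx2r]
            apply mul_le_mul_of_nonneg_right hexpmono (by positivity)
        _ = Real.exp (-(nu/4 * r)) + r^2 * Real.exp (-(nu/4 * r)) := by ring
        _ ≤ 1 + 64/nu^2 := add_le_add hexp1 hsq
        _ ≤ ((4:ℝ)^k + 1 + 64/nu^2) * 1 := by rw [mul_one]; linarith
        _ ≤ ((4:ℝ)^k + 1 + 64/nu^2) * (1 + (t*x)^(2*k)) := by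
            apply mul_le_mul_of_nonneg_left _ (by positivity)
            linarith
  -- combine
  have key : y ^ ((k:ℝ))⁻¹ * Real.exp (-(nu * y)) * (1 + x^(2*k)) ≤
      (1 + 2/nu) * (((4:ℝ)^k + 1 + 64/nu^2) * (1 + (t*x)^(2*k))) := by
    have e1 : Real.exp (-(nu * y)) = Real.exp (-(nu/2 * y)) * Real.exp (-(nu/2 * y)) := by
      rw [← Real.exp_add]; ring_nf
    have hyk : (0:ℝ) ≤ y ^ ((k:ℝ))⁻¹ := Real.rpow_nonneg hy0 _
    have h2 : (0:ℝ) ≤ Real.exp (-(nu/2*y)) := (Real.exp_pos _).le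
    calc y ^ ((k:ℝ))⁻¹ * Real.exp (-(nu * y)) * (1 + x^(2*k))
        = (y ^ ((k:ℝ))⁻¹ * Real.exp (-(nu/2 * y))) * (Real.exp (-(nu/2 * y)) * (1 + x^(2*k))) := by
          rw [e1]; ring
      _ ≤ (1 + 2/nu) * (((4:ℝ)^k + 1 + 64/nu^2) * (1 + (t*x)^(2*k))) := by
          apply mul_le_mul claim1 claim2 (by positivity) (by positivity)
  -- rewrite LHS
  have hexpid : Real.exp (nu * (t*x)^k) = Real.exp (nu * x^k) * Real.exp (-(nu * y)) := by
    rw [← Real.exp_add]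
    congr 1
    rw [hy, mul_pow]
    ring
  have lhs_eq : (1 + x^(2*k))/x * Real.exp (-(nu * x^k)) *
        (y ^ ((k:ℝ))⁻¹ * (t*x / (1 + (t*x)^(2*k)) * Real.exp (nu * (t*x)^k)) * k / t)
      = k * (y ^ ((k:ℝ))⁻¹ * Real.exp (-(nu * y)) * (1 + x^(2*k))) / (1 + (t*x)^(2*k)) := by
    rw [hexpid]
    have hex : Real.exp (-(nu * x^k)) * Real.exp (nu * x^k) = 1 := by
      rw [← Real.exp_add]; simp
    calc (1 + x^(2*k))/x * Real.exp (-(nu * x^k)) *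
          (y ^ ((k:ℝ))⁻¹ * (t*x / (1 + (t*x)^(2*k)) * (Real.exp (nu * x^k) * Real.exp (-(nu * y)))) * k / t)
        = (Real.exp (-(nu * x^k)) * Real.exp (nu * x^k)) *
            ((1 + x^(2*k))/x * (y ^ ((k:ℝ))⁻¹ * (t*x / (1 + (t*x)^(2*k)) * Real.exp (-(nu * y))) * k / t)) := by
          ring
      _ = (1 + x^(2*k))/x * (y ^ ((k:ℝ))⁻¹ * (t*x / (1 + (t*x)^(2*k)) * Real.exp (-(nu * y))) * k / t) := by
          rw [hex, one_mul]
      _ = k * (y ^ ((k:ℝ))⁻¹ * Real.exp (-(nu * y)) * (1 + x^(2*k))) / (1 + (t*x)^(2*k)) :=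
          alg1 hx.ne' ht.ne' hD1.ne'
  rw [lhs_eq, div_le_iff₀ hD1]
  calc (k:ℝ) * (y ^ ((k:ℝ))⁻¹ * Real.exp (-(nu * y)) * (1 + x^(2*k)))
      ≤ (k:ℝ) * ((1 + 2/nu) * (((4:ℝ)^k + 1 + 64/nu^2) * (1 + (t*x)^(2*k)))) :=
        mul_le_mul_of_nonneg_left key (by positivity)
    _ = ↑k * ((1 + 2/nu) * ((4:ℝ)^k + 1 + 64/nu^2)) * (1 + (t*x)^(2*k)) := by ring
/- Statement 4: Proposition 4 of the paper, continuity of a convolution operator mixing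
the spaces E_{(beta,mu)} and F_{(nu,beta,mu,k);cl(Omega)}. -/

open MeasureTheory Set

noncomputable def eW (beta mu m : ℝ) : ℝ := (1 + |m|) ^ mu * Real.exp (beta * |m|)

/-- Weight defining the norm of the space `F_{(nu,beta,mu,k);cl(Omega)}`. -/
noncomputable def fW (nu beta mu : ℝ) (k : ℕ) (tau : ℂ) (m : ℝ) : ℝ :=
  (1 + |m|) ^ mu * ((1 + ‖tau‖ ^ (2 * k)) / ‖tau‖) *
    Real.exp (beta * |m| - nu * ‖tau‖ ^ k)

set_option maxHeartbeats 4000000 in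
theorem stmt_4 (Q R : Polynomial ℂ) (mu nu : ℝ) (k : ℕ)
    (hdeg : Q.natDegree ≤ R.natDegree)
    (hR : ∀ m : ℝ, R.eval (Complex.I * m) ≠ 0)
    (hmu : (Q.natDegree : ℝ) + 1 < mu)
    (hk : 1 ≤ k) (hnu : 0 < nu) :
    ∃ E3 : ℝ, 0 < E3 ∧
    ∀ beta : ℝ, 0 < beta →
    ∀ Omega : Set ℂ, IsOpen Omega → Omega.Nonempty →
      (∀ z ∈ closure Omega, ∀ t ∈ Set.Icc (0:ℝ) 1, (t : ℂ) • z ∈ closure Omega) →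
    ∀ b : ℝ → ℂ, Continuous b →
      (∀ m : ℝ, ‖b m‖ ≤ 1 / ‖R.eval (Complex.I * m)‖) →
    ∀ f : ℝ → ℂ, Continuous f →
    ∀ Bf : ℝ, (∀ m : ℝ, eW beta mu m * ‖f m‖ ≤ Bf) →
    ∀ g : ℂ → ℝ → ℂ,
      ContinuousOn (fun p : ℂ × ℝ => g p.1 p.2) (closure Omega ×ˢ univ) →
      (∀ m : ℝ, DifferentiableOn ℂ (fun tau => g tau m) Omega) →
    ∀ Bg : ℝ,
      (∀ tau ∈ closure Omega, ∀ m : ℝ, fW nu beta mu k tau m * ‖g tau m‖ ≤ Bg) →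
    ∀ tau ∈ closure Omega, ∀ m : ℝ,
      fW nu beta mu k tau m *
        ‖b m * ∫ t in (0:ℝ)..1,
            (tau ^ k - ((t : ℂ) * tau) ^ k) ^ ((1 : ℂ) / k) *
              (∫ m1 : ℝ, f (m - m1) * Q.eval (Complex.I * m1) * g ((t : ℂ) * tau) m1) *
              (k : ℂ) / (t : ℂ)‖
        ≤ E3 * Bf * Bg := by
  classical
  obtain ⟨cQ, hcQ, hQbound⟩ := poly_upper Q
  obtain ⟨cR, hcR, hRbound⟩ := poly_lower R hR
  obtain ⟨Ct, hCt, hta⟩ := tau_est hnu hk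
  set e : ℝ := mu - Q.natDegree with he_def
  have hdQ0 : (0:ℝ) ≤ Q.natDegree := Nat.cast_nonneg _
  have he1 : 1 < e := by rw [he_def]; linarith
  have he0 : 0 < e := by linarith
  have hmu1 : 1 < mu := by linarith
  have hmu0 : 0 < mu := by linarith
  have hem : e ≤ mu := by rw [he_def]; linarith
  have hint_e : Integrable (fun y : ℝ => (1 + |y|) ^ (-e)) := by
    have := integrable_one_add_norm (E := ℝ) (μ := volume) (r := e) (by simpa using he1)
    simpa [Real.norm_eq_abs] using this
  have hint_mu : Integrable (fun y : ℝ => (1 + |y|) ^ (-mu)) := by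
    have := integrable_one_add_norm (E := ℝ) (μ := volume) (r := mu) (by simpa using hmu1)
    simpa [Real.norm_eq_abs] using this
  set Je : ℝ := ∫ y : ℝ, (1 + |y|) ^ (-e) with hJe
  set Jmu : ℝ := ∫ y : ℝ, (1 + |y|) ^ (-mu) with hJmu
  have hJe0 : 0 ≤ Je := integral_nonneg fun y => Real.rpow_nonneg (by positivity) _
  have hJmu0 : 0 ≤ Jmu := integral_nonneg fun y => Real.rpow_nonneg (by positivity) _
  have h2mu : (0:ℝ) < 2 ^ mu := Real.rpow_pos_of_pos two_pos mu
  set K1 : ℝ := cQ * 2 ^ mu * (Je + Jmu) with hK1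
  have hK10 : 0 ≤ K1 := by positivity
  refine ⟨K1 * Ct / cR + 1, by positivity, ?_⟩
  intro beta hbeta Omega hOpen hNe hstar b hbc hbb f hfc Bf hBf g hgc hgd Bg hBg tau htau m
  have hBf0 : 0 ≤ Bf :=
    le_trans (mul_nonneg (by unfold eW; positivity) (norm_nonneg _)) (hBf 0)
  obtain ⟨z0, hz0⟩ := hNe
  have hBg0 : 0 ≤ Bg :=
    le_trans (mul_nonneg (by unfold fW; positivity) (norm_nonneg _))
      (hBg z0 (subset_closure hz0) 0)
  by_cases htau0 : tau = 0
  · subst htau0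
    have h2k : 2 * k ≠ 0 := by omega
    have hfw0 : fW nu beta mu k 0 m = 0 := by
      unfold fW
      simp [zero_pow h2k]
    rw [hfw0, zero_mul]
    exact mul_nonneg (mul_nonneg (by positivity) hBf0) hBg0
  · have hx : 0 < ‖tau‖ := norm_pos_iff.mpr htau0
    set x : ℝ := ‖tau‖ with hxdef
    have hrho : 0 < ‖R.eval (Complex.I * m)‖ := norm_pos_iff.mpr (hR m)
    set rho : ℝ := ‖R.eval (Complex.I * m)‖ with hrho_def
    set Em : ℝ := Real.exp (-(beta * |m|)) * (1 + |m|) ^ (-e) with hEm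
    have hEm0 : 0 ≤ Em := by rw [hEm]; positivity
    set Cbd : ℝ := K1 * Bf * Bg * Em *
      (Ct * (x / (1 + x ^ (2*k))) * Real.exp (nu * x ^ k)) with hCbd
    have hpt : ∀ t ∈ Set.uIoc (0:ℝ) 1,
        ‖(tau ^ k - ((t : ℂ) * tau) ^ k) ^ ((1 : ℂ) / k) *
          (∫ m1 : ℝ, f (m - m1) * Q.eval (Complex.I * m1) * g ((t : ℂ) * tau) m1) *
          (k : ℂ) / (t : ℂ)‖ ≤ Cbd := by
      intro t htmem
      rw [Set.uIoc_of_le (by norm_num : (0:ℝ) ≤ 1)] at htmem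
      obtain ⟨ht, ht1⟩ := htmem
      have htx : 0 < t * x := by positivity
      have hmemt : ((t:ℂ) * tau) ∈ closure Omega := by
        have := hstar tau htau t ⟨ht.le, ht1⟩
        simpa [smul_eq_mul] using this
      have hnt : ‖(t:ℂ) * tau‖ = t * x := by
        rw [norm_mul, Complex.norm_real, Real.norm_eq_abs, abs_of_pos ht, hxdef]
      set Vt : ℝ := t*x / (1 + (t*x)^(2*k)) * Real.exp (nu * (t*x)^k) with hVt
      have hVt0 : 0 ≤ Vt := by rw [hVt]; positivity
      -- bound on f
      have hfb : ∀ s : ℝ, ‖f s‖ ≤ Bf * ((1 + |s|) ^ (-mu) * Real.exp (-(beta * |s|))) := by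
        intro s
        have hone : eW beta mu s * ((1 + |s|) ^ (-mu) * Real.exp (-(beta * |s|))) = 1 := by
          unfold eW
          have e1 : ((1:ℝ) + |s|) ^ mu * (1 + |s|) ^ (-mu) = 1 := by
            rw [← Real.rpow_add (by positivity)]; simp
          have e3 : Real.exp (beta * |s|) * Real.exp (-(beta * |s|)) = 1 := by
            rw [← Real.exp_add]; simp
          calc (1 + |s|) ^ mu * Real.exp (beta * |s|) *
                ((1 + |s|) ^ (-mu) * Real.exp (-(beta * |s|)))
              = ((1 + |s|) ^ mu * (1 + |s|) ^ (-mu)) *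
                  (Real.exp (beta * |s|) * Real.exp (-(beta * |s|))) := by ring
            _ = 1 := by rw [e1, e3]; norm_num
        have hRF0 : 0 ≤ (1 + |s|) ^ (-mu) * Real.exp (-(beta * |s|)) := by positivity
        calc ‖f s‖ = ‖f s‖ * (eW beta mu s * ((1 + |s|) ^ (-mu) * Real.exp (-(beta * |s|)))) := by
              rw [hone, mul_one]
          _ = (eW beta mu s * ‖f s‖) * ((1 + |s|) ^ (-mu) * Real.exp (-(beta * |s|))) := by ring
          _ ≤ Bf * ((1 + |s|) ^ (-mu) * Real.exp (-(beta * |s|))) :=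
              mul_le_mul_of_nonneg_right (hBf s) hRF0
      -- bound on g
      have hgb : ∀ m1 : ℝ, ‖g ((t:ℂ) * tau) m1‖ ≤
          Bg * ((1 + |m1|) ^ (-mu) * (Vt * Real.exp (-(beta * |m1|)))) := by
        intro m1
        have hone : fW nu beta mu k ((t:ℂ) * tau) m1 *
            ((1 + |m1|) ^ (-mu) * (Vt * Real.exp (-(beta * |m1|)))) = 1 := by
          unfold fW
          rw [hnt, hVt]
          have e1 : ((1:ℝ) + |m1|) ^ mu * (1 + |m1|) ^ (-mu) = 1 := by
            rw [← Real.rpow_add (by positivity)]; simp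
          have e2 : (1 + (t*x)^(2*k))/(t*x) * (t*x/(1 + (t*x)^(2*k))) = 1 := by
            have h1 : (0:ℝ) < 1 + (t*x)^(2*k) := by positivity
            field_simp
          have e3 : Real.exp (beta * |m1| - nu * (t*x)^k) *
              (Real.exp (nu * (t*x)^k) * Real.exp (-(beta * |m1|))) = 1 := by
            rw [← Real.exp_add, ← Real.exp_add]
            have : beta * |m1| - nu * (t*x)^k + (nu * (t*x)^k + -(beta * |m1|)) = 0 := by ring
            rw [this, Real.exp_zero]
          calc (1 + |m1|) ^ mu * ((1 + (t*x)^(2*k))/(t*x)) *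
                Real.exp (beta * |m1| - nu * (t*x)^k) *
                ((1 + |m1|) ^ (-mu) * (t*x/(1 + (t*x)^(2*k)) * Real.exp (nu * (t*x)^k) *
                  Real.exp (-(beta * |m1|))))
              = ((1 + |m1|) ^ mu * (1 + |m1|) ^ (-mu)) *
                ((1 + (t*x)^(2*k))/(t*x) * (t*x/(1 + (t*x)^(2*k)))) *
                (Real.exp (beta * |m1| - nu * (t*x)^k) *
                  (Real.exp (nu * (t*x)^k) * Real.exp (-(beta * |m1|)))) := by ring
            _ = 1 := by rw [e1, e2, e3]; norm_num
        have hRF0 : 0 ≤ (1 + |m1|) ^ (-mu) * (Vt * Real.exp (-(beta * |m1|))) := by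
          have := hVt0
          positivity
        calc ‖g ((t:ℂ) * tau) m1‖
            = ‖g ((t:ℂ) * tau) m1‖ * (fW nu beta mu k ((t:ℂ) * tau) m1 *
                ((1 + |m1|) ^ (-mu) * (Vt * Real.exp (-(beta * |m1|))))) := by
              rw [hone, mul_one]
          _ = (fW nu beta mu k ((t:ℂ) * tau) m1 * ‖g ((t:ℂ) * tau) m1‖) *
                ((1 + |m1|) ^ (-mu) * (Vt * Real.exp (-(beta * |m1|)))) := by ring
          _ ≤ Bg * ((1 + |m1|) ^ (-mu) * (Vt * Real.exp (-(beta * |m1|)))) :=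
              mul_le_mul_of_nonneg_right (hBg _ hmemt m1) hRF0
      -- majorant
      set pe : ℝ → ℝ := fun m1 =>
        2 ^ mu * (1 + |m|) ^ (-mu) * (1 + |m1|) ^ (-e)
          + 2 ^ mu * (1 + |m|) ^ (-e) * (1 + |m-m1|) ^ (-mu) with hpe
      have hKf0 : 0 ≤ Bf * cQ * Bg * Vt * Real.exp (-(beta * |m|)) := by
        have := (Real.exp_pos (-(beta * |m|))).le
        exact mul_nonneg (mul_nonneg (mul_nonneg (mul_nonneg hBf0 hcQ.le) hBg0) hVt0) this
      have hmaj : ∀ m1 : ℝ,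
          ‖f (m - m1) * Q.eval (Complex.I * m1) * g ((t:ℂ) * tau) m1‖ ≤
            (Bf * cQ * Bg * Vt * Real.exp (-(beta * |m|))) * pe m1 := by
        intro m1
        rw [norm_mul, norm_mul]
        have h1 := hfb (m - m1)
        have h2 := hQbound m1
        have h3 := hgb m1
        have step : ‖f (m - m1)‖ * ‖Q.eval (Complex.I * m1)‖ * ‖g ((t:ℂ) * tau) m1‖ ≤
            (Bf * ((1 + |m-m1|) ^ (-mu) * Real.exp (-(beta * |m-m1|)))) *
              (cQ * (1 + |m1|) ^ Q.natDegree) *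
              (Bg * ((1 + |m1|) ^ (-mu) * (Vt * Real.exp (-(beta * |m1|))))) := by
          have hb1 : 0 ≤ Bf * ((1 + |m-m1|) ^ (-mu) * Real.exp (-(beta * |m-m1|))) :=
            mul_nonneg hBf0 (by positivity)
          have hb2 : 0 ≤ Bf * ((1 + |m-m1|) ^ (-mu) * Real.exp (-(beta * |m-m1|))) *
              (cQ * (1 + |m1|) ^ Q.natDegree) :=
            mul_nonneg hb1 (by positivity)
          exact mul_le_mul (mul_le_mul h1 h2 (norm_nonneg _) hb1) h3 (norm_nonneg _) hb2
        refine step.trans ?_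
        have hpw : ((1:ℝ) + |m1|) ^ Q.natDegree * (1 + |m1|) ^ (-mu) = (1 + |m1|) ^ (-e) := by
          rw [← Real.rpow_natCast (1 + |m1|) Q.natDegree, ← Real.rpow_add (by positivity)]
          congr 1
          rw [he_def]; ring
        have hexp : Real.exp (-(beta * |m-m1|)) * Real.exp (-(beta * |m1|)) ≤
            Real.exp (-(beta * |m|)) := by
          rw [← Real.exp_add]
          apply Real.exp_le_exp.mpr
          have htri : |m| ≤ |m-m1| + |m1| := by
            calc |m| = |(m-m1) + m1| := by ring_nf
              _ ≤ _ := abs_add_le _ _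
          nlinarith [hbeta.le]
        have hpeetre := peetre hmu0 he0 hem m m1
        have hc0 : 0 ≤ Bf * cQ * Bg * Vt :=
          mul_nonneg (mul_nonneg (mul_nonneg hBf0 hcQ.le) hBg0) hVt0
        calc (Bf * ((1 + |m-m1|) ^ (-mu) * Real.exp (-(beta * |m-m1|)))) *
              (cQ * (1 + |m1|) ^ Q.natDegree) *
              (Bg * ((1 + |m1|) ^ (-mu) * (Vt * Real.exp (-(beta * |m1|)))))
            = (Bf * cQ * Bg * Vt) *
                (((1 + |m1|) ^ Q.natDegree * (1 + |m1|) ^ (-mu)) * (1 + |m-m1|) ^ (-mu)) *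
                (Real.exp (-(beta * |m-m1|)) * Real.exp (-(beta * |m1|))) := by ring
          _ = (Bf * cQ * Bg * Vt) * ((1 + |m-m1|) ^ (-mu) * (1 + |m1|) ^ (-e)) *
                (Real.exp (-(beta * |m-m1|)) * Real.exp (-(beta * |m1|))) := by rw [hpw]; ring
          _ ≤ (Bf * cQ * Bg * Vt) * ((1 + |m-m1|) ^ (-mu) * (1 + |m1|) ^ (-e)) *
                Real.exp (-(beta * |m|)) := by
              apply mul_le_mul_of_nonneg_left hexp
              exact mul_nonneg hc0 (by positivity)
          _ ≤ (Bf * cQ * Bg * Vt) * pe m1 * Real.exp (-(beta * |m|)) := by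
              apply mul_le_mul_of_nonneg_right (mul_le_mul_of_nonneg_left hpeetre hc0)
                (Real.exp_pos _).le
          _ = (Bf * cQ * Bg * Vt * Real.exp (-(beta * |m|))) * pe m1 := by ring
      have hint1 : Integrable (fun m1 : ℝ => (1 + |m-m1|) ^ (-mu)) := hint_mu.comp_sub_left m
      have hintpe : Integrable pe :=
        (hint_e.const_mul _).add (hint1.const_mul _)
      have hInner : ‖∫ m1 : ℝ, f (m - m1) * Q.eval (Complex.I * m1) * g ((t:ℂ) * tau) m1‖ ≤
          (Bf * cQ * Bg * Vt * Real.exp (-(beta * |m|))) *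
            (2 ^ mu * (1 + |m|) ^ (-e) * (Je + Jmu)) := by
        have hb1 := norm_integral_le_of_norm_le (hintpe.const_mul
            (Bf * cQ * Bg * Vt * Real.exp (-(beta * |m|))))
          (Filter.Eventually.of_forall hmaj)
        refine hb1.trans ?_
        rw [integral_const_mul]
        apply mul_le_mul_of_nonneg_left _ hKf0
        have hpeint : ∫ m1 : ℝ, pe m1 =
            2 ^ mu * (1 + |m|) ^ (-mu) * Je + 2 ^ mu * (1 + |m|) ^ (-e) * Jmu := by
          rw [hpe]
          rw [integral_add (hint_e.const_mul _) (hint1.const_mul _),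
            integral_const_mul, integral_const_mul]
          congr 1
          congr 1
          exact integral_sub_left_eq_self (fun y : ℝ => (1 + |y|) ^ (-mu)) volume m
        rw [hpeint]
        have hmono : ((1:ℝ) + |m|) ^ (-mu) ≤ (1 + |m|) ^ (-e) :=
          Real.rpow_le_rpow_of_exponent_le (by linarith [abs_nonneg m]) (by linarith)
        have hb2 : 0 ≤ ((1:ℝ) + |m|) ^ (-e) := by positivity
        nlinarith [mul_nonneg (mul_nonneg h2mu.le (sub_nonneg.mpr hmono)) hJe0]
      -- norm of cpow factor
      have h1tk : (0:ℝ) ≤ 1 - t^k := by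
        have := pow_le_one₀ ht.le ht1 (n := k)
        linarith
      have hcpow : ‖(tau ^ k - ((t:ℂ) * tau) ^ k) ^ ((1:ℂ)/k)‖ =
          ((1 - t^k) * x^k) ^ ((k:ℝ))⁻¹ := by
        have hb : tau ^ k - ((t:ℂ) * tau) ^ k = (((1 - t^k : ℝ) : ℂ)) * tau ^ k := by
          push_cast
          ring
        rw [hb, one_div, Complex.norm_cpow_inv_nat]
        congr 1
        rw [norm_mul, norm_pow, Complex.norm_real, Real.norm_eq_abs, abs_of_nonneg h1tk]
      have hknorm : ‖(k:ℂ)‖ = (k:ℝ) := by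
        rw [Complex.norm_natCast]
      have htnorm : ‖(t:ℂ)‖ = t := by
        rw [Complex.norm_real, Real.norm_eq_abs, abs_of_pos ht]
      rw [norm_div, norm_mul, norm_mul, hcpow, hknorm, htnorm]
      -- tau-part core bound
      have hcore : ((1 - t^k) * x^k) ^ ((k:ℝ))⁻¹ * Vt * k / t ≤
          Ct * (x/(1 + x^(2*k))) * Real.exp (nu * x^k) := by
        have hw := hta x t hx ht ht1
        rw [← hVt] at hw
        have hwpos : (0:ℝ) < (1 + x^(2*k))/x * Real.exp (-(nu * x^k)) := by positivity
        have hprod1 : ((1 + x^(2*k))/x * Real.exp (-(nu * x^k))) *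
            (Ct * (x/(1 + x^(2*k))) * Real.exp (nu * x^k)) = Ct := by
          have e2 : (1 + x^(2*k))/x * (x/(1 + x^(2*k))) = 1 := by
            have h1 : (0:ℝ) < 1 + x^(2*k) := by positivity
            field_simp
          have e3 : Real.exp (-(nu * x^k)) * Real.exp (nu * x^k) = 1 := by
            rw [← Real.exp_add]; simp
          calc ((1 + x^(2*k))/x * Real.exp (-(nu * x^k))) *
                (Ct * (x/(1 + x^(2*k))) * Real.exp (nu * x^k))
              = Ct * ((1 + x^(2*k))/x * (x/(1 + x^(2*k)))) *
                  (Real.exp (-(nu * x^k)) * Real.exp (nu * x^k)) := by ring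
            _ = Ct := by rw [e2, e3]; ring
        have hw2 : ((1 + x^(2*k))/x * Real.exp (-(nu * x^k))) *
            (((1 - t^k) * x^k) ^ ((k:ℝ))⁻¹ * Vt * k / t) ≤
            ((1 + x^(2*k))/x * Real.exp (-(nu * x^k))) *
            (Ct * (x/(1 + x^(2*k))) * Real.exp (nu * x^k)) := by
          rw [hprod1]
          calc ((1 + x^(2*k))/x * Real.exp (-(nu * x^k))) *
                (((1 - t^k) * x^k) ^ ((k:ℝ))⁻¹ * Vt * k / t)
              = (1 + x^(2*k))/x * Real.exp (-(nu * x^k)) *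
                (((1 - t^k) * x^k) ^ ((k:ℝ))⁻¹ * Vt * ↑k / t) := by ring
            _ ≤ Ct := hw
        exact le_of_mul_le_mul_left hw2 hwpos
      have hY0 : 0 ≤ ((1 - t^k) * x^k) ^ ((k:ℝ))⁻¹ :=
        Real.rpow_nonneg (by positivity) _
      have hKEm0 : 0 ≤ K1 * Bf * Bg * Em :=
        mul_nonneg (mul_nonneg (mul_nonneg hK10 hBf0) hBg0) hEm0
      calc ((1 - t^k) * x^k) ^ ((k:ℝ))⁻¹ *
            ‖∫ m1 : ℝ, f (m - m1) * Q.eval (Complex.I * m1) * g ((t:ℂ) * tau) m1‖ * k / t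
          ≤ ((1 - t^k) * x^k) ^ ((k:ℝ))⁻¹ *
              ((Bf * cQ * Bg * Vt * Real.exp (-(beta * |m|))) *
                (2 ^ mu * (1 + |m|) ^ (-e) * (Je + Jmu))) * k / t := by
            have h1 : ((1 - t^k) * x^k) ^ ((k:ℝ))⁻¹ *
                ‖∫ m1 : ℝ, f (m - m1) * Q.eval (Complex.I * m1) * g ((t:ℂ) * tau) m1‖ * k ≤
                ((1 - t^k) * x^k) ^ ((k:ℝ))⁻¹ *
                ((Bf * cQ * Bg * Vt * Real.exp (-(beta * |m|))) *
                  (2 ^ mu * (1 + |m|) ^ (-e) * (Je + Jmu))) * k :=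
              mul_le_mul_of_nonneg_right (mul_le_mul_of_nonneg_left hInner hY0)
                (Nat.cast_nonneg k)
            exact div_le_div_of_nonneg_right h1 ht.le
        _ = (K1 * Bf * Bg * Em) * (((1 - t^k) * x^k) ^ ((k:ℝ))⁻¹ * Vt * k / t) := by
            rw [hK1, hEm]; ring
        _ ≤ (K1 * Bf * Bg * Em) * (Ct * (x/(1 + x^(2*k))) * Real.exp (nu * x^k)) :=
            mul_le_mul_of_nonneg_left hcore hKEm0
        _ = Cbd := by rw [hCbd]
    -- use interval integral bound
    have hInt : ‖∫ t in (0:ℝ)..1,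
        (tau ^ k - ((t : ℂ) * tau) ^ k) ^ ((1 : ℂ) / k) *
          (∫ m1 : ℝ, f (m - m1) * Q.eval (Complex.I * m1) * g ((t : ℂ) * tau) m1) *
          (k : ℂ) / (t : ℂ)‖ ≤ Cbd := by
      have := intervalIntegral.norm_integral_le_of_norm_le_const hpt
      simpa using this
    have hfW0 : 0 ≤ fW nu beta mu k tau m := by unfold fW; positivity
    have hCbd0 : 0 ≤ Cbd := by
      rw [hCbd]
      have := hEm0
      have h1 : 0 ≤ K1 * Bf * Bg * Em :=
        mul_nonneg (mul_nonneg (mul_nonneg hK10 hBf0) hBg0) hEm0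
      have h2 : 0 ≤ Ct * (x / (1 + x ^ (2*k))) * Real.exp (nu * x ^ k) := by positivity
      exact mul_nonneg h1 h2
    have hident : fW nu beta mu k tau m * (1/rho * Cbd) =
        (K1 * Ct * Bf * Bg) * (1/rho * (1 + |m|) ^ Q.natDegree) := by
      unfold fW
      rw [← hxdef, hCbd, hEm]
      have eA : ((1:ℝ) + |m|) ^ mu * (1 + |m|) ^ (-e) = (1 + |m|) ^ Q.natDegree := by
        rw [← Real.rpow_add (by positivity), ← Real.rpow_natCast (1 + |m|) Q.natDegree]
        congr 1
        rw [he_def]; ring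
      have eB : (1 + x^(2*k))/x * (x/(1 + x^(2*k))) = 1 := by
        have h1 : (0:ℝ) < 1 + x^(2*k) := by positivity
        field_simp
      have eC : Real.exp (beta * |m| - nu * x^k) *
          (Real.exp (-(beta * |m|)) * Real.exp (nu * x^k)) = 1 := by
        rw [← Real.exp_add, ← Real.exp_add]
        have : beta * |m| - nu * x^k + (-(beta * |m|) + nu * x^k) = 0 := by ring
        rw [this, Real.exp_zero]
      calc (1 + |m|) ^ mu * ((1 + x^(2*k))/x) * Real.exp (beta * |m| - nu * x^k) *
            (1/rho * (K1 * Bf * Bg * (Real.exp (-(beta * |m|)) * (1 + |m|) ^ (-e)) *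
              (Ct * (x/(1 + x^(2*k))) * Real.exp (nu * x^k))))
          = (K1 * Ct * Bf * Bg) * (1/rho) *
              (((1 + |m|) ^ mu * (1 + |m|) ^ (-e)) *
               ((1 + x^(2*k))/x * (x/(1 + x^(2*k)))) *
               (Real.exp (beta * |m| - nu * x^k) *
                 (Real.exp (-(beta * |m|)) * Real.exp (nu * x^k)))) := by ring
        _ = (K1 * Ct * Bf * Bg) * (1/rho * (1 + |m|) ^ Q.natDegree) := by
            rw [eA, eB, eC]; ring
    have hfrac : 1/rho * ((1:ℝ) + |m|) ^ Q.natDegree ≤ 1/cR := by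
      have hstep : cR * (1 + |m|) ^ Q.natDegree ≤ rho := by
        have h1 : ((1:ℝ) + |m|) ^ Q.natDegree ≤ (1 + |m|) ^ R.natDegree :=
          pow_le_pow_right₀ (by linarith [abs_nonneg m]) hdeg
        calc cR * (1 + |m|) ^ Q.natDegree ≤ cR * (1 + |m|) ^ R.natDegree :=
              mul_le_mul_of_nonneg_left h1 hcR.le
          _ ≤ rho := hRbound m
      have heq : 1/rho * ((1:ℝ) + |m|) ^ Q.natDegree = ((1:ℝ) + |m|) ^ Q.natDegree / rho := by
        ring
      rw [heq, div_le_div_iff₀ hrho hcR]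
      nlinarith
    have hK1Ct0 : 0 ≤ K1 * Ct * Bf * Bg :=
      mul_nonneg (mul_nonneg (mul_nonneg hK10 hCt.le) hBf0) hBg0
    calc fW nu beta mu k tau m *
          ‖b m * ∫ t in (0:ℝ)..1,
            (tau ^ k - ((t : ℂ) * tau) ^ k) ^ ((1 : ℂ) / k) *
              (∫ m1 : ℝ, f (m - m1) * Q.eval (Complex.I * m1) * g ((t : ℂ) * tau) m1) *
              (k : ℂ) / (t : ℂ)‖
        = fW nu beta mu k tau m * (‖b m‖ * ‖∫ t in (0:ℝ)..1,
            (tau ^ k - ((t : ℂ) * tau) ^ k) ^ ((1 : ℂ) / k) *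
              (∫ m1 : ℝ, f (m - m1) * Q.eval (Complex.I * m1) * g ((t : ℂ) * tau) m1) *
              (k : ℂ) / (t : ℂ)‖) := by rw [norm_mul]
      _ ≤ fW nu beta mu k tau m * (1/rho * Cbd) := by
          apply mul_le_mul_of_nonneg_left _ hfW0
          exact mul_le_mul (hbb m) hInt (norm_nonneg _) (by positivity)
      _ = (K1 * Ct * Bf * Bg) * (1/rho * (1 + |m|) ^ Q.natDegree) := hident
      _ ≤ (K1 * Ct * Bf * Bg) * (1/cR) := mul_le_mul_of_nonneg_left hfrac hK1Ct0
      _ ≤ (K1 * Ct / cR + 1) * Bf * Bg := by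
          have hbfbg : 0 ≤ Bf * Bg := mul_nonneg hBf0 hBg0
          have : (K1 * Ct * Bf * Bg) * (1/cR) = (K1 * Ct / cR) * (Bf * Bg) := by
            field_simp
          rw [this]
          nlinarith [hbfbg]
end

section
/- Let q > 1, let Δ1, Δ2, Δ3 > 0 be real numbers and 0 < Δ4 < 1. Then for any kappa with 0 < kappa < 2 Δ2 log^2(q)/log^2(Δ4), there exist a real number 0 < upsilon < Δ3 and constants D1 ∈ ℝ and D2 > 0 such that Σ_{j ≥ 0} Δ1^j q^{−Δ2 j^2} exp( −Δ3 Δ4^j / eps ) ≤ D2 exp( −(kappa/(2 log q)) log^2(eps) ) eps^{D1} for all eps ∈ (0, upsilon]. -/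
open Real Filter Topology

private lemma stmt_12_key (A B c c' θ C ε K C₂ Δ3 L j : ℝ)
    (hA : 0 < A) (hB : 0 < B) (hθpos : 0 < θ) (hθ1 : θ < 1)
    (hθsq : A * θ ^ 2 = c' * B ^ 2)
    (hC : 0 < C) (hε : 0 < ε) (hε1 : ε < 1) (hεc' : ε * c' = c' - c)
    (hK : 4 * ε * A * K = C ^ 2) (hKpos : 0 < K)
    (hC₂B : C₂ * B = C * θ) (hC₂pos : 0 < C₂)
    (hj0 : 0 ≤ j) (hL0 : 0 ≤ L)
    (hLtail : c * L ^ 2 ≤ Δ3 * Real.exp ((1 - θ) * L)) (h3 : 0 < Δ3) :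
    c * L ^ 2 ≤ A * j ^ 2 - C * j + Δ3 * Real.exp (L - B * j) + C₂ * L + K := by
  have hE : 0 < Real.exp (L - B * j) := Real.exp_pos _
  rcases le_or_gt (θ * L) (B * j) with hcase | hcase
  · -- B j ≥ θ L : quadratic term dominates
    have hθL : 0 ≤ θ * L := mul_nonneg hθpos.le hL0
    have hsq0 : (θ * L) * (θ * L) ≤ (B * j) * (B * j) := mul_self_le_mul_self hθL hcase
    have hsq : θ ^ 2 * L ^ 2 ≤ B ^ 2 * j ^ 2 := by nlinarith [hsq0]
    have m1 : A * (θ ^ 2 * L ^ 2) ≤ A * (B ^ 2 * j ^ 2) :=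
      mul_le_mul_of_nonneg_left hsq hA.le
    have m2 : A * (θ ^ 2 * L ^ 2) = B ^ 2 * (c' * L ^ 2) := by
      linear_combination L ^ 2 * hθsq
    have m3 : A * (B ^ 2 * j ^ 2) = B ^ 2 * (A * j ^ 2) := by ring
    have hF1 : c' * L ^ 2 ≤ A * j ^ 2 := by
      have m4 : B ^ 2 * (c' * L ^ 2) ≤ B ^ 2 * (A * j ^ 2) := by linarith
      exact le_of_mul_le_mul_left m4 (by positivity)
    have hF2 : C * j ≤ ε * A * j ^ 2 + K := by
      have h4εA : (0:ℝ) < 4 * ε * A := by positivity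
      nlinarith [sq_nonneg (2 * ε * A * j - C)]
    have hmain : 0 ≤ (1 - ε) * (A * j ^ 2 - c' * L ^ 2) :=
      mul_nonneg (by linarith) (by linarith)
    have hexp_eq : (1 - ε) * (A * j ^ 2 - c' * L ^ 2)
        = A * j ^ 2 - ε * A * j ^ 2 - c' * L ^ 2 + ε * c' * L ^ 2 := by ring
    have hεc'L : ε * c' * L ^ 2 = (c' - c) * L ^ 2 := by rw [hεc']
    have hpos1 : 0 < Δ3 * Real.exp (L - B * j) := mul_pos h3 hE
    have hpos2 : 0 ≤ C₂ * L := mul_nonneg hC₂pos.le hL0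
    linarith
  · -- B j < θ L : exponential term dominates
    have hCj : C * j ≤ C₂ * L := by
      have h6 : C * (B * j) ≤ C * (θ * L) :=
        mul_le_mul_of_nonneg_left hcase.le hC.le
      have h7 : C * θ * L = C₂ * B * L := by rw [hC₂B]
      have m : B * (C * j) ≤ B * (C₂ * L) := by nlinarith [h6, h7]
      exact le_of_mul_le_mul_left m hB
    have hexp : Real.exp ((1 - θ) * L) ≤ Real.exp (L - B * j) :=
      Real.exp_le_exp.mpr (by nlinarith)
    have h8 : Δ3 * Real.exp ((1 - θ) * L) ≤ Δ3 * Real.exp (L - B * j) :=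
      mul_le_mul_of_nonneg_left hexp h3.le
    have h9 : 0 ≤ A * j ^ 2 := mul_nonneg hA.le (sq_nonneg j)
    linarith

/- Statement 12: Lemma 3 of the paper. -/
set_option maxHeartbeats 1000000 in

theorem stmt_12 (q Δ1 Δ2 Δ3 Δ4 : ℝ) (hq : 1 < q)
    (h1 : 0 < Δ1) (h2 : 0 < Δ2) (h3 : 0 < Δ3) (h4 : 0 < Δ4) (h4' : Δ4 < 1)
    (κ : ℝ) (hκ : 0 < κ) (hκ' : κ < 2 * Δ2 * (Real.log q) ^ 2 / (Real.log Δ4) ^ 2) :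
    ∃ υ : ℝ, 0 < υ ∧ υ < Δ3 ∧ ∃ D1 : ℝ, ∃ D2 : ℝ, 0 < D2 ∧
      ∀ eps : ℝ, eps ∈ Set.Ioc 0 υ →
        (∑' j : ℕ, Δ1 ^ (j : ℕ) * q ^ (-Δ2 * (j : ℝ) ^ 2) *
            Real.exp (-Δ3 * Δ4 ^ (j : ℕ) / eps))
          ≤ D2 * Real.exp (-(κ / (2 * Real.log q)) * (Real.log eps) ^ 2) * eps ^ D1 := by
  have hq0 : 0 < q := lt_trans one_pos hq
  set lq := Real.log q with hlq_def
  have hlq : 0 < lq := Real.log_pos hq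
  set A := Δ2 * lq with hA_def
  have hA : 0 < A := mul_pos h2 hlq
  have hlog4 : Real.log Δ4 < 0 := Real.log_neg h4 h4'
  set B := -Real.log Δ4 with hB_def
  have hB : 0 < B := neg_pos.mpr hlog4
  set c := κ / (2 * lq) with hc_def
  have hc : 0 < c := div_pos hκ (by linarith)
  have hcA : c * B ^ 2 < A := by
    have hB2 : (Real.log Δ4) ^ 2 = B ^ 2 := by rw [hB_def]; ring
    rw [hB2, lt_div_iff₀ (by positivity)] at hκ'
    rw [hc_def, div_mul_eq_mul_div, div_lt_iff₀ (by linarith : (0:ℝ) < 2 * lq)]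
    have hAe : A * (2 * lq) = 2 * Δ2 * lq ^ 2 := by rw [hA_def]; ring
    linarith
  have hcAB : c < A / B ^ 2 := (lt_div_iff₀ (by positivity)).mpr hcA
  set c' := (c + A / B ^ 2) / 2 with hc'_def
  have hc'1 : c < c' := by rw [hc'_def]; linarith
  have hc'2 : c' < A / B ^ 2 := by rw [hc'_def]; linarith
  have hc'pos : 0 < c' := lt_trans hc hc'1
  have hc'B : c' * B ^ 2 < A := (lt_div_iff₀ (by positivity)).mp hc'2
  set θ := B * Real.sqrt (c' / A) with hθ_def
  have hθpos : 0 < θ := mul_pos hB (Real.sqrt_pos.mpr (div_pos hc'pos hA))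
  have hθsq : A * θ ^ 2 = c' * B ^ 2 := by
    rw [hθ_def, mul_pow, Real.sq_sqrt (le_of_lt (div_pos hc'pos hA))]
    field_simp
  have hθsq1 : θ ^ 2 < 1 := by
    by_contra h
    push_neg at h
    have : A * 1 ≤ A * θ ^ 2 := mul_le_mul_of_nonneg_left h hA.le
    linarith
  have hθ1 : θ < 1 := by
    by_contra h
    push_neg at h
    have : 1 * 1 ≤ θ * θ := mul_le_mul h h one_pos.le (by linarith)
    nlinarith
  have h1θ : 0 < 1 - θ := by linarith
  set C := max (Real.log Δ1 + Real.log 2) 1 with hC_def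
  have hC : (0:ℝ) < C := lt_of_lt_of_le one_pos (le_max_right _ _)
  have hC1 : Real.log Δ1 + Real.log 2 ≤ C := le_max_left _ _
  set ε := (c' - c) / c' with hε_def
  have hε : 0 < ε := div_pos (by linarith) hc'pos
  have hε1 : ε < 1 := by rw [hε_def, div_lt_one hc'pos]; linarith
  have hεc' : ε * c' = c' - c := by rw [hε_def]; field_simp
  set K := C ^ 2 / (4 * ε * A) with hK_def
  have hKpos : 0 < K := by positivity
  have hK : 4 * ε * A * K = C ^ 2 := by rw [hK_def]; field_simp
  set C₂ := C * θ / B with hC₂_def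
  have hC₂pos : 0 < C₂ := by positivity
  have hC₂B : C₂ * B = C * θ := by rw [hC₂_def]; field_simp
  -- obtain L₂ such that c L^2 ≤ Δ3 exp((1-θ)L) for L ≥ L₂
  obtain ⟨L₂, hL₂⟩ : ∃ L₂ : ℝ, ∀ L ≥ L₂, c * L ^ 2 ≤ Δ3 * Real.exp ((1 - θ) * L) := by
    have h0 : Tendsto (fun x : ℝ => x ^ 2 * Real.exp (-x)) atTop (𝓝 0) :=
      Real.tendsto_pow_mul_exp_neg_atTop_nhds_zero 2
    have h2' : Tendsto (fun L : ℝ => (1 - θ) * L) atTop atTop :=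
      Tendsto.const_mul_atTop h1θ tendsto_id
    have h3' : Tendsto (fun L : ℝ => ((1 - θ) * L) ^ 2 * Real.exp (-((1 - θ) * L)))
        atTop (𝓝 0) := h0.comp h2'
    have h4'' : Tendsto (fun L : ℝ =>
        c / (1 - θ) ^ 2 * (((1 - θ) * L) ^ 2 * Real.exp (-((1 - θ) * L)))) atTop (𝓝 0) := by
      simpa using h3'.const_mul (c / (1 - θ) ^ 2)
    have h5 : ∀ᶠ L : ℝ in atTop,
        c / (1 - θ) ^ 2 * (((1 - θ) * L) ^ 2 * Real.exp (-((1 - θ) * L))) ≤ Δ3 :=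
      h4''.eventually_le_const h3
    obtain ⟨L₂, hL₂⟩ := eventually_atTop.mp h5
    refine ⟨L₂, fun L hL => ?_⟩
    have h6 := hL₂ L hL
    have h7 : c / (1 - θ) ^ 2 * (((1 - θ) * L) ^ 2 * Real.exp (-((1 - θ) * L)))
        = c * L ^ 2 * Real.exp (-((1 - θ) * L)) := by
      field_simp
    rw [h7] at h6
    rw [Real.exp_neg, ← div_eq_mul_inv,
      div_le_iff₀ (Real.exp_pos ((1 - θ) * L))] at h6
    exact h6
  set υ := min (Real.exp (-(max L₂ 1))) (Δ3 / 2) with hυ_def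
  refine ⟨υ, by positivity, ?_, -C₂, 2 * Real.exp K, by positivity, ?_⟩
  · calc υ ≤ Δ3 / 2 := min_le_right _ _
      _ < Δ3 := by linarith
  rintro eps ⟨heps0, hepsυ⟩
  set t := Real.log eps with ht_def
  set L := -t with hL_def
  have hLge : max L₂ 1 ≤ L := by
    have h5 : eps ≤ Real.exp (-(max L₂ 1)) := le_trans hepsυ (min_le_left _ _)
    have h6 : t ≤ -(max L₂ 1) := by
      rw [ht_def]
      calc Real.log eps ≤ Real.log (Real.exp (-(max L₂ 1))) := Real.log_le_log heps0 h5
        _ = -(max L₂ 1) := Real.log_exp _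
    rw [hL_def]; linarith
  have hL1 : 1 ≤ L := le_trans (le_max_right _ _) hLge
  have hL2' : L₂ ≤ L := le_trans (le_max_left _ _) hLge
  have hL0 : 0 ≤ L := by linarith
  have key : ∀ j : ℕ, c * L ^ 2 ≤
      A * (j:ℝ) ^ 2 - C * j + Δ3 * Real.exp (L - B * j) + C₂ * L + K :=
    fun j => stmt_12_key A B c c' θ C ε K C₂ Δ3 L j hA hB hθpos hθ1 hθsq hC hε hε1
      hεc' hK hKpos hC₂B hC₂pos (Nat.cast_nonneg j) hL0 (hL₂ L hL2') h3
  have heps_eq : eps = Real.exp (-L) := by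
    rw [hL_def, neg_neg, ht_def, Real.exp_log heps0]
  have hterm : ∀ j : ℕ, Δ1 ^ j * q ^ (-Δ2 * (j:ℝ) ^ 2) * Real.exp (-Δ3 * Δ4 ^ j / eps)
      ≤ (1/2 : ℝ) ^ j * Real.exp (-(c * L ^ 2) + C₂ * L + K) := by
    intro j
    have hj0 : (0:ℝ) ≤ j := Nat.cast_nonneg j
    have e1 : Δ1 ^ j = Real.exp ((j:ℝ) * Real.log Δ1) := by
      rw [Real.exp_nat_mul, Real.exp_log h1]
    have e2 : q ^ (-Δ2 * (j:ℝ) ^ 2) = Real.exp (-(A * (j:ℝ) ^ 2)) := by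
      rw [Real.rpow_def_of_pos hq0]
      congr 1
      rw [hA_def, hlq_def]; ring
    have e3 : Real.exp (-Δ3 * Δ4 ^ j / eps)
        = Real.exp (-(Δ3 * Real.exp (L - B * (j:ℝ)))) := by
      congr 1
      have h44 : Δ4 ^ j = Real.exp ((j:ℝ) * Real.log Δ4) := by
        rw [Real.exp_nat_mul, Real.exp_log h4]
      rw [h44, heps_eq, mul_div_assoc, ← Real.exp_sub]
      rw [show (j:ℝ) * Real.log Δ4 - -L = L - B * (j:ℝ) by rw [hB_def]; ring]
      ring
    have e4 : (1/2 : ℝ) ^ j = Real.exp ((j:ℝ) * (-Real.log 2)) := by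
      rw [Real.exp_nat_mul, Real.exp_neg, Real.exp_log two_pos, one_div]
    rw [e1, e2, e3, e4, ← Real.exp_add, ← Real.exp_add, ← Real.exp_add]
    apply Real.exp_le_exp.mpr
    have h6 : (Real.log Δ1 + Real.log 2) * (j:ℝ) ≤ C * (j:ℝ) :=
      mul_le_mul_of_nonneg_right hC1 hj0
    have h7 := key j
    linarith
  have hg_sum : Summable (fun j : ℕ => (1/2 : ℝ) ^ j * Real.exp (-(c * L ^ 2) + C₂ * L + K)) :=
    summable_geometric_two.mul_right _
  have hf_nonneg : ∀ j : ℕ, 0 ≤ Δ1 ^ j * q ^ (-Δ2 * (j:ℝ) ^ 2) *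
      Real.exp (-Δ3 * Δ4 ^ j / eps) := by
    intro j
    have hrpow := Real.rpow_nonneg hq0.le (-Δ2 * (j:ℝ) ^ 2)
    positivity
  have hf_sum : Summable (fun j : ℕ => Δ1 ^ j * q ^ (-Δ2 * (j:ℝ) ^ 2) *
      Real.exp (-Δ3 * Δ4 ^ j / eps)) :=
    Summable.of_nonneg_of_le hf_nonneg hterm hg_sum
  calc (∑' j : ℕ, Δ1 ^ j * q ^ (-Δ2 * (j:ℝ) ^ 2) * Real.exp (-Δ3 * Δ4 ^ j / eps))
      ≤ ∑' j : ℕ, (1/2 : ℝ) ^ j * Real.exp (-(c * L ^ 2) + C₂ * L + K) :=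
        Summable.tsum_le_tsum hterm hf_sum hg_sum
    _ = (∑' j : ℕ, (1/2 : ℝ) ^ j) * Real.exp (-(c * L ^ 2) + C₂ * L + K) := tsum_mul_right
    _ = 2 * Real.exp (-(c * L ^ 2) + C₂ * L + K) := by rw [tsum_geometric_two]
    _ = 2 * Real.exp K * Real.exp (-c * t ^ 2) * eps ^ (-C₂) := by
        rw [Real.rpow_def_of_pos heps0, ← ht_def, mul_assoc, ← Real.exp_add, mul_assoc,
          ← Real.exp_add]
        congr 1
        rw [hL_def]; ring
end

section
/- (q-Gevrey Watson lemma.) Let q > 1, κ > 0, b > 0 and let f : [0,b] → ℂ be continuous. Suppose f admits Σ_{n≥0} a_n t^n ∈ ℂ[[t]] as q-Gevrey asymptotic expansion of order 1/κ at 0, i.e. there exist C, A > 0 and 0 < δ < b such that |f(t) − Σ_{n=0}^{N} a_n t^n| ≤ C A^N q^{(N+1)N/(2κ)} |t|^{N+1} for every N ≥ 0 and all t ∈ [0,δ]. Then the function I(x) = ∫_0^b f(s) e^{−s/x} ds admits the formal power series Σ_{n ≥ 0} a_n n! x^{n+1} as q-Gevrey asymptotic expansion of order 1/κ' at 0 for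 every 0 < κ' < κ: there exist C', A' > 0 and 0 < δ' < b such that |I(x) − Σ_{n=0}^{N−1} a_n n! x^{n+1}| ≤ C' (A')^{N+1} q^{(N+1)N/(2κ')} |x|^{N+1} for every N ≥ 1 and all x ∈ (0, δ']. -/
set_option maxHeartbeats 1000000

open MeasureTheory Set Real


lemma auxW_integrable (n : ℕ) {r : ℝ} (hr : 0 < r) :
    IntegrableOn (fun t : ℝ => t ^ n * Real.exp (-(r * t))) (Ioi 0) := by
  have h := integrableOn_rpow_mul_exp_neg_mul_rpow (p := 1) (s := (n:ℝ)) (b := r)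
    (lt_of_lt_of_le neg_one_lt_zero (Nat.cast_nonneg n)) one_pos hr
  refine h.congr_fun (fun t ht => ?_) measurableSet_Ioi
  dsimp only; rw [Real.rpow_natCast, Real.rpow_one, neg_mul]

lemma auxW_integral (n : ℕ) {r : ℝ} (hr : 0 < r) :
    ∫ t in Ioi (0:ℝ), t ^ n * Real.exp (-(r * t)) = n.factorial * (1/r) ^ (n+1) := by
  have h := Real.integral_rpow_mul_exp_neg_mul_Ioi (a := (n:ℝ)+1) (by positivity) hr
  rw [show ((n:ℝ)+1-1) = (n:ℝ) by ring] at h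
  have e : ∫ t in Ioi (0:ℝ), t ^ n * Real.exp (-(r * t))
      = ∫ t in Ioi (0:ℝ), t ^ ((n:ℝ)) * Real.exp (-(r * t)) := by
    refine setIntegral_congr_fun measurableSet_Ioi (fun t ht => ?_)
    rw [Real.rpow_natCast]
  rw [e, h, show ((n:ℝ)+1) = ((n+1 : ℕ):ℝ) by push_cast; ring, Real.rpow_natCast,
    Nat.cast_add, Nat.cast_one, Real.Gamma_nat_eq_factorial]
  ring

lemma auxW_integrable' (n : ℕ) {x : ℝ} (hx : 0 < x) :
    IntegrableOn (fun t : ℝ => t ^ n * Real.exp (-(t/x))) (Ioi 0) := by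
  refine (auxW_integrable n (r := 1/x) (by positivity)).congr_fun (fun t ht => ?_)
    measurableSet_Ioi
  ring_nf

lemma auxW_integral' (n : ℕ) {x : ℝ} (hx : 0 < x) :
    ∫ t in Ioi (0:ℝ), t ^ n * Real.exp (-(t/x)) = n.factorial * x ^ (n+1) := by
  have e : ∫ t in Ioi (0:ℝ), t ^ n * Real.exp (-(t/x))
      = ∫ t in Ioi (0:ℝ), t ^ n * Real.exp (-(1/x * t)) := by
    refine setIntegral_congr_fun measurableSet_Ioi (fun t ht => ?_); ring_nf
  rw [e, auxW_integral n (by positivity : (0:ℝ) < 1/x), one_div_one_div]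

lemma auxW_split (n : ℕ) {x δ : ℝ} (hx : 0 < x) (hδ : 0 < δ) :
    (n.factorial : ℝ) * x ^ (n+1) - ∫ t in (0:ℝ)..δ, t ^ n * Real.exp (-(t/x))
      = ∫ t in Ioi δ, t ^ n * Real.exp (-(t/x)) := by
  rw [intervalIntegral.integral_of_le hδ.le]
  have hu : Ioc (0:ℝ) δ ∪ Ioi δ = Ioi 0 := Ioc_union_Ioi_eq_Ioi hδ.le
  have hd : Disjoint (Ioc (0:ℝ) δ) (Ioi δ) := Ioc_disjoint_Ioi le_rfl
  have h := setIntegral_union (f := fun t : ℝ => t ^ n * Real.exp (-(t/x))) (μ := volume)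
    hd measurableSet_Ioi ((auxW_integrable' n hx).mono_set Ioc_subset_Ioi_self)
    ((auxW_integrable' n hx).mono_set (Ioi_subset_Ioi hδ.le))
  rw [hu] at h
  rw [← auxW_integral' n hx, h]; ring

lemma auxW_tail (n : ℕ) {x δ : ℝ} (hx : 0 < x) (hδ : 0 < δ) :
    ∫ t in Ioi δ, t ^ n * Real.exp (-(t/x))
      ≤ Real.exp (-(δ/(2*x))) * (n.factorial * (2*x) ^ (n+1)) := by
  have h2x : 0 < 1/(2*x) := by positivity
  have hint : IntegrableOn (fun t : ℝ => t ^ n * Real.exp (-(t/(2*x)))) (Ioi 0) :=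
    auxW_integrable' n (by positivity)
  have hintδ : IntegrableOn (fun t : ℝ => t ^ n * Real.exp (-(t/(2*x)))) (Ioi δ) :=
    hint.mono_set (Ioi_subset_Ioi hδ.le)
  have step1 : ∫ t in Ioi δ, t ^ n * Real.exp (-(t/x))
      ≤ ∫ t in Ioi δ, Real.exp (-(δ/(2*x))) * (t ^ n * Real.exp (-(t/(2*x)))) := by
    refine setIntegral_mono_on
      ((auxW_integrable' n hx).mono_set (Ioi_subset_Ioi hδ.le))
      (hintδ.const_mul _) measurableSet_Ioi (fun t ht => ?_)
    have htδ : δ ≤ t := le_of_lt ht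
    have ht0 : 0 < t := lt_of_lt_of_le hδ htδ
    have he : Real.exp (-(t/x)) = Real.exp (-(t/(2*x))) * Real.exp (-(t/(2*x))) := by
      rw [← Real.exp_add]; ring_nf
    have h1 : Real.exp (-(t/(2*x))) ≤ Real.exp (-(δ/(2*x))) := by
      apply Real.exp_le_exp.2; apply neg_le_neg; gcongr
    calc t ^ n * Real.exp (-(t/x))
        = Real.exp (-(t/(2*x))) * (t ^ n * Real.exp (-(t/(2*x)))) := by rw [he]; ring
      _ ≤ Real.exp (-(δ/(2*x))) * (t ^ n * Real.exp (-(t/(2*x)))) := by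
          apply mul_le_mul_of_nonneg_right h1 (by positivity)
  have step2 : ∫ t in Ioi δ, Real.exp (-(δ/(2*x))) * (t ^ n * Real.exp (-(t/(2*x))))
      ≤ Real.exp (-(δ/(2*x))) * (n.factorial * (2*x) ^ (n+1)) := by
    rw [MeasureTheory.integral_const_mul]
    apply mul_le_mul_of_nonneg_left _ (Real.exp_pos _).le
    have hsub : ∫ t in Ioi δ, t ^ n * Real.exp (-(t/(2*x)))
        ≤ ∫ t in Ioi (0:ℝ), t ^ n * Real.exp (-(t/(2*x))) := by
      refine setIntegral_mono_set hint ?_ (HasSubset.Subset.eventuallyLE (Ioi_subset_Ioi hδ.le))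
      refine (ae_restrict_iff' measurableSet_Ioi).2 (Filter.Eventually.of_forall fun t ht => ?_)
      have : 0 < t := ht
      positivity
    exact hsub.trans (le_of_eq (auxW_integral' n (by positivity)))
  exact step1.trans step2

lemma auxW_expbound {u : ℝ} (hu : 0 < u) (m : ℕ) :
    Real.exp (-u) ≤ m.factorial * (1/u) ^ m := by
  rw [Real.exp_neg]
  have h := Real.pow_div_factorial_le_exp u hu.le m
  have h0 : 0 < u ^ m / m.factorial := by positivity
  calc (Real.exp u)⁻¹ ≤ (u ^ m / m.factorial)⁻¹ := by
        apply inv_anti₀ h0 h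
    _ = m.factorial * (1/u) ^ m := by rw [inv_div, one_div_pow, mul_one_div]

lemma auxW_lin {γ : ℝ} (hγ : 1 < γ) (n : ℕ) : (n:ℝ) ≤ (1/(γ-1)) * γ^n := by
  have hb := one_add_mul_le_pow (a := γ-1) (by linarith) n
  rw [show (1 + (γ-1)) = γ by ring] at hb
  rw [one_div, inv_mul_eq_div, le_div_iff₀ (by linarith)]
  nlinarith [hb]

lemma auxW_fact {γ K : ℝ} (hγ : 1 < γ) (hK1 : 1 ≤ K) (hK : ∀ n:ℕ, (n:ℝ) ≤ K * γ^n) (n : ℕ) :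
    (n.factorial : ℝ) ≤ K^(n+1) * γ^(n*(n+1)) := by
  have h0γ : (0:ℝ) ≤ γ := by linarith
  calc (n.factorial : ℝ) ≤ (n:ℝ)^n := by exact_mod_cast Nat.factorial_le_pow n
    _ ≤ (K * γ^n)^n := pow_le_pow_left₀ (Nat.cast_nonneg n) (hK n) n
    _ = K^n * γ^(n*n) := by rw [mul_pow, ← pow_mul]
    _ ≤ K^(n+1) * γ^(n*(n+1)) := by
        apply mul_le_mul (pow_le_pow_right₀ hK1 n.le_succ)
          (pow_le_pow_right₀ hγ.le (Nat.mul_le_mul_left n n.le_succ))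
          (by positivity) (by positivity)


lemma auxW_coeff (q κ b : ℝ) (hq : 1 < q) (hκ : 0 < κ) (hb : 0 < b)
    (f : ℝ → ℂ)
    (a : ℕ → ℂ) (C A δ : ℝ) (hC : 0 < C) (hA : 0 < A) (hδ : 0 < δ) (hδb : δ < b)
    (hasymp : ∀ N : ℕ, ∀ t ∈ Set.Icc (0:ℝ) δ,
      ‖f t - ∑ n ∈ Finset.range (N + 1), a n * (t : ℂ) ^ n‖
        ≤ C * A ^ N * q ^ (((N : ℝ) + 1) * N / (2 * κ)) * |t| ^ (N + 1))
    (B : ℝ) (hB1 : 1 ≤ B) (hAB : A ≤ B) (hq0 : 0 < q) :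
    ∀ n : ℕ, ‖a n‖ ≤ (‖f δ‖ + C * δ + C) * B ^ n * q ^ (((n:ℝ)+1) * n / (2*κ)) := by
  have hδmem : δ ∈ Icc (0:ℝ) δ := ⟨hδ.le, le_rfl⟩
  have hB0 : (0:ℝ) < B := lt_of_lt_of_le one_pos hB1
  intro n
  match n with
  | 0 =>
    have h0 := hasymp 0 δ hδmem
    simp only [Nat.cast_zero, Finset.range_one, Finset.sum_singleton, pow_zero, mul_one,
      zero_add, mul_zero, zero_div, Real.rpow_zero, pow_one, abs_of_pos hδ] at h0 ⊢
    have : ‖a 0‖ ≤ ‖f δ‖ + ‖f δ - a 0‖ := by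
      have e := norm_sub_le (f δ) (f δ - a 0)
      rw [show f δ - (f δ - a 0) = a 0 from by ring] at e
      exact e
    nlinarith [norm_nonneg (f δ)]
  | (n+1) =>
    have h1 := hasymp (n+1) δ hδmem
    have h0 := hasymp n δ hδmem
    rw [Finset.sum_range_succ (n := n+1)] at h1
    rw [abs_of_pos hδ] at h0 h1
    push_cast at h1 ⊢
    set En : ℝ := ((n:ℝ)+1+1) * ((n:ℝ)+1) / (2*κ) with hEn
    have hqpos : (0:ℝ) < q ^ En := Real.rpow_pos_of_pos hq0 _
    have hq0' : (0:ℝ) < q ^ (((n:ℝ)+1)*n/(2*κ)) := Real.rpow_pos_of_pos hq0 _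
    have hkey : ‖a (n+1)‖ * δ^(n+1)
        ≤ C * A^n * q ^ (((n:ℝ)+1)*n/(2*κ)) * δ^(n+1) + C * A^(n+1) * q ^ En * δ^(n+2) := by
      have hnorm := norm_sub_le (f δ - ∑ k ∈ Finset.range (n+1), a k * (δ:ℂ)^k)
        (f δ - (∑ k ∈ Finset.range (n+1), a k * (δ:ℂ)^k + a (n+1) * (δ:ℂ)^(n+1)))
      rw [show (f δ - ∑ k ∈ Finset.range (n+1), a k * (δ:ℂ)^k)
            - (f δ - (∑ k ∈ Finset.range (n+1), a k * (δ:ℂ)^k + a (n+1) * (δ:ℂ)^(n+1)))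
          = a (n+1) * (δ:ℂ)^(n+1) from by ring] at hnorm
      rw [norm_mul, norm_pow, Complex.norm_real, Real.norm_eq_abs, abs_of_pos hδ] at hnorm
      linarith [hnorm, h0, h1]
    have hδp : (0:ℝ) < δ^(n+1) := by positivity
    rw [← mul_le_mul_iff_of_pos_right hδp]
    have hqm : q ^ (((n:ℝ)+1)*n/(2*κ)) ≤ q ^ En := by
      apply Real.rpow_le_rpow_of_exponent_le hq.le
      rw [hEn]
      have hn0 : (0:ℝ) ≤ (n:ℝ) := Nat.cast_nonneg n
      apply div_le_div_of_nonneg_right ?_ (by linarith)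
      nlinarith
    have hA1 : A^n ≤ B^(n+1) :=
      (pow_le_pow_left₀ hA.le hAB n).trans (pow_le_pow_right₀ hB1 n.le_succ)
    have hA2 : A^(n+1) ≤ B^(n+1) := pow_le_pow_left₀ hA.le hAB (n+1)
    have hfδ : (0:ℝ) ≤ ‖f δ‖ := norm_nonneg _
    have hBp : (0:ℝ) < B^(n+1) := pow_pos hB0 (n+1)
    calc ‖a (n+1)‖ * δ^(n+1)
        ≤ C * A^n * q ^ (((n:ℝ)+1)*n/(2*κ)) * δ^(n+1) + C * A^(n+1) * q ^ En * δ^(n+2) := hkey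
      _ ≤ C * B^(n+1) * q ^ En * δ^(n+1) + C * δ * B^(n+1) * q ^ En * δ^(n+1) := by
          have t1 : C * A^n * q ^ (((n:ℝ)+1)*n/(2*κ)) * δ^(n+1)
              ≤ C * B^(n+1) * q ^ En * δ^(n+1) := by
            have h := mul_le_mul hA1 hqm hq0'.le (by positivity : (0:ℝ) ≤ B^(n+1))
            have h2 := mul_le_mul_of_nonneg_right (mul_le_mul_of_nonneg_left h hC.le) hδp.le
            linarith [h2]
          have t2 : C * A^(n+1) * q ^ En * δ^(n+2) ≤ C * δ * B^(n+1) * q ^ En * δ^(n+1) := by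
            have e2 : δ^(n+2) = δ * δ^(n+1) := by ring
            rw [e2]
            have h := mul_le_mul_of_nonneg_right hA2
              (by positivity : (0:ℝ) ≤ C * δ * q ^ En * δ^(n+1))
            linarith [h]
          linarith
      _ ≤ (‖f δ‖ + C * δ + C) * B^(n+1) * q ^ En * δ^(n+1) := by
          have h := mul_nonneg (mul_nonneg (mul_nonneg hfδ hBp.le) hqpos.le) hδp.le
          linarith [h]

lemma auxW_core (q κ b : ℝ) (hq : 1 < q) (hκ : 0 < κ) (hb : 0 < b)
    (f : ℝ → ℂ) (hf : ContinuousOn f (Set.Icc 0 b))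
    (a : ℕ → ℂ) (C A δ : ℝ) (hC : 0 < C) (hA : 0 < A) (hδ : 0 < δ) (hδb : δ < b)
    (hasymp : ∀ N : ℕ, ∀ t ∈ Set.Icc (0:ℝ) δ,
      ‖f t - ∑ n ∈ Finset.range (N + 1), a n * (t : ℂ) ^ n‖
        ≤ C * A ^ N * q ^ (((N : ℝ) + 1) * N / (2 * κ)) * |t| ^ (N + 1))
    (M : ℝ) (hM : ∀ t ∈ Set.Icc (0:ℝ) b, ‖f t‖ ≤ M) (hM0 : 0 ≤ M)
    (x : ℝ) (hx0 : 0 < x) (hxδ : x ≤ δ) (hx1 : x ≤ 1) (m : ℕ) :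
    ‖(∫ s in (0:ℝ)..b, f s * Complex.exp (-(s / x : ℝ)))
        - ∑ n ∈ Finset.range (m+1), a n * (n.factorial : ℂ) * (x : ℂ) ^ (n + 1)‖
      ≤ (C * A^m * q ^ (((m:ℝ)+1)*m/(2*κ))) * ((m+1).factorial * x^(m+2))
        + M * (b-δ) * Real.exp (-(δ/x))
        + ∑ n ∈ Finset.range (m+1), ‖a n‖
            * (Real.exp (-(δ/(2*x))) * (n.factorial * (2*x)^(n+1))) := by
  set E : ℝ → ℂ := fun s => Complex.exp (-(s / x : ℝ)) with hE
  have hEc : Continuous E :=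
    Complex.continuous_exp.comp
      ((Complex.continuous_ofReal.comp (continuous_id.div_const x)).neg)
  have hEnorm : ∀ s : ℝ, ‖E s‖ = Real.exp (-(s/x)) := fun s => by
    simp [hE, Complex.norm_exp]
  set P : ℝ → ℂ := fun s => ∑ n ∈ Finset.range (m+1), a n * (s:ℂ)^n with hP
  have hPc : Continuous P := by
    apply continuous_finset_sum
    intro n _
    exact continuous_const.mul (Complex.continuous_ofReal.pow n)
  have hI1 : IntervalIntegrable (fun s => f s * E s) volume 0 δ := by
    apply ContinuousOn.intervalIntegrable_of_Icc hδ.le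
    exact (hf.mono (Icc_subset_Icc le_rfl hδb.le)).mul hEc.continuousOn
  have hI2 : IntervalIntegrable (fun s => f s * E s) volume δ b := by
    apply ContinuousOn.intervalIntegrable_of_Icc hδb.le
    exact (hf.mono (Icc_subset_Icc hδ.le le_rfl)).mul hEc.continuousOn
  have hIP : IntervalIntegrable (fun s => P s * E s) volume 0 δ :=
    (hPc.mul hEc).intervalIntegrable _ _
  have hIfP : IntervalIntegrable (fun s => (f s - P s) * E s) volume 0 δ := by
    have e : (fun s => (f s - P s) * E s) = (fun s => f s * E s - P s * E s) := by
      funext s; ring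
    rw [e]; exact hI1.sub hIP
  set J : ℕ → ℝ := fun n => ∫ s in (0:ℝ)..δ, s^n * Real.exp (-(s/x)) with hJ
  have hJle : ∀ n : ℕ, 0 ≤ (n.factorial:ℝ) * x^(n+1) - J n ∧
      (n.factorial:ℝ) * x^(n+1) - J n
        ≤ Real.exp (-(δ/(2*x))) * (n.factorial * (2*x)^(n+1)) := by
    intro n
    simp only [hJ]
    rw [auxW_split n hx0 hδ]
    constructor
    · apply setIntegral_nonneg measurableSet_Ioi
      intro t ht
      have ht0 : 0 < t := lt_trans hδ ht
      positivity
    · exact auxW_tail n hx0 hδ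
  have hEn' : ∀ n : ℕ, ∫ s in (0:ℝ)..δ, (s:ℂ)^n * E s = (J n : ℂ) := by
    intro n
    rw [hJ, ← intervalIntegral.integral_ofReal]
    apply intervalIntegral.integral_congr
    intro s hs
    simp only [hE]
    push_cast [Complex.ofReal_exp]
    ring
  have hPEint : ∫ s in (0:ℝ)..δ, P s * E s = ∑ n ∈ Finset.range (m+1), a n * (J n : ℂ) := by
    have e : ∀ s : ℝ, P s * E s = ∑ n ∈ Finset.range (m+1), a n * ((s:ℂ)^n * E s) := by
      intro s; rw [hP]; rw [Finset.sum_mul]; apply Finset.sum_congr rfl; intros; ring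
    rw [intervalIntegral.integral_congr (fun s _ => e s)]
    rw [intervalIntegral.integral_finset_sum]
    · apply Finset.sum_congr rfl; intro n _
      rw [intervalIntegral.integral_const_mul, hEn' n]
    · intro n _
      exact (continuous_const.mul ((Complex.continuous_ofReal.pow n).mul hEc)).intervalIntegrable _ _
  have hfPsub : ∫ s in (0:ℝ)..δ, (f s - P s) * E s
      = (∫ s in (0:ℝ)..δ, f s * E s) - ∫ s in (0:ℝ)..δ, P s * E s := by
    rw [← intervalIntegral.integral_sub hI1 hIP]
    apply intervalIntegral.integral_congr
    intro s _; ring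
  have hadj := intervalIntegral.integral_add_adjacent_intervals hI1 hI2
  have key : (∫ s in (0:ℝ)..b, f s * E s)
        - ∑ n ∈ Finset.range (m+1), a n * (n.factorial : ℂ) * (x : ℂ) ^ (n + 1)
      = (∫ s in (0:ℝ)..δ, (f s - P s) * E s) + (∫ s in δ..b, f s * E s)
        + ∑ n ∈ Finset.range (m+1),
            (a n * ((J n : ℂ) - ((n.factorial:ℝ) * x^(n+1) : ℝ))) := by
    rw [hfPsub, hPEint, ← hadj]
    have e1 : ∀ n ∈ Finset.range (m+1),
        a n * ((J n : ℂ) - ((n.factorial:ℝ) * x^(n+1) : ℝ))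
          = a n * (J n:ℂ) - a n * (n.factorial:ℂ) * (x:ℂ)^(n+1) := by
      intro n _; push_cast; ring
    rw [Finset.sum_congr rfl e1, Finset.sum_sub_distrib]
    ring
  have hJpos : ∀ n : ℕ, 0 ≤ J n := by
    intro n
    apply intervalIntegral.integral_nonneg hδ.le
    intro u hu
    have : (0:ℝ) ≤ u := hu.1
    positivity
  -- T1 bound
  have hT1 : ‖∫ s in (0:ℝ)..δ, (f s - P s) * E s‖
      ≤ (C * A^m * q ^ (((m:ℝ)+1)*m/(2*κ))) * ((m+1).factorial * x^(m+2)) := by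
    have hc0 : (0:ℝ) ≤ C * A^m * q ^ (((m:ℝ)+1)*m/(2*κ)) := by positivity
    have hb1 : ‖∫ s in (0:ℝ)..δ, (f s - P s) * E s‖
        ≤ |∫ s in (0:ℝ)..δ, (C * A^m * q ^ (((m:ℝ)+1)*m/(2*κ))) * (s^(m+1) * Real.exp (-(s/x)))| := by
      apply intervalIntegral.norm_integral_le_abs_of_norm_le
      · refine (ae_restrict_iff' measurableSet_uIoc).2 (Filter.Eventually.of_forall fun s hs => ?_)
        rw [Set.uIoc_of_le hδ.le] at hs
        have hs0 : 0 < s := hs.1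
        have hsδ : s ≤ δ := hs.2
        rw [norm_mul, hEnorm s]
        have hbd := hasymp m s ⟨hs0.le, hsδ⟩
        rw [abs_of_pos hs0] at hbd
        calc ‖f s - P s‖ * Real.exp (-(s/x))
            ≤ (C * A^m * q ^ (((m:ℝ)+1)*m/(2*κ)) * s^(m+1)) * Real.exp (-(s/x)) := by
              apply mul_le_mul_of_nonneg_right hbd (Real.exp_pos _).le
          _ = (C * A^m * q ^ (((m:ℝ)+1)*m/(2*κ))) * (s^(m+1) * Real.exp (-(s/x))) := by ring
      · apply Continuous.intervalIntegrable
        apply continuous_const.mul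
        apply (continuous_pow (m+1)).mul
        apply Real.continuous_exp.comp (by continuity)
    rw [intervalIntegral.integral_const_mul] at hb1
    have hJval : (∫ s in (0:ℝ)..δ, s^(m+1) * Real.exp (-(s/x))) = J (m+1) := rfl
    rw [hJval, abs_mul, abs_of_nonneg hc0, abs_of_nonneg (hJpos (m+1))] at hb1
    refine hb1.trans ?_
    apply mul_le_mul_of_nonneg_left _ hc0
    have h := (hJle (m+1)).1
    linarith [h]
  -- T2 bound
  have hT2 : ‖∫ s in δ..b, f s * E s‖ ≤ M * (b-δ) * Real.exp (-(δ/x)) := by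
    have h := intervalIntegral.norm_integral_le_of_norm_le_const
      (a := δ) (b := b) (C := M * Real.exp (-(δ/x))) (f := fun s => f s * E s) ?_
    · rw [abs_of_nonneg (by linarith : (0:ℝ) ≤ b - δ)] at h
      calc ‖∫ s in δ..b, f s * E s‖ ≤ M * Real.exp (-(δ/x)) * (b - δ) := h
        _ = M * (b-δ) * Real.exp (-(δ/x)) := by ring
    · intro s hs
      rw [Set.uIoc_of_le hδb.le] at hs
      rw [norm_mul, hEnorm s]
      have hfs : ‖f s‖ ≤ M := hM s ⟨le_trans hδ.le hs.1.le, hs.2⟩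
      have hexp : Real.exp (-(s/x)) ≤ Real.exp (-(δ/x)) := by
        apply Real.exp_le_exp.2
        apply neg_le_neg
        gcongr
        exact hs.1.le
      exact mul_le_mul hfs hexp (Real.exp_pos _).le hM0
  -- Sum bound
  have hSum : ‖∑ n ∈ Finset.range (m+1),
        (a n * ((J n : ℂ) - ((n.factorial:ℝ) * x^(n+1) : ℝ)))‖
      ≤ ∑ n ∈ Finset.range (m+1), ‖a n‖
          * (Real.exp (-(δ/(2*x))) * (n.factorial * (2*x)^(n+1))) := by
    refine (norm_sum_le _ _).trans (Finset.sum_le_sum fun n _ => ?_)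
    rw [norm_mul]
    have e2 : (J n : ℂ) - ((n.factorial:ℝ) * x^(n+1) : ℝ)
        = ((J n - (n.factorial:ℝ) * x^(n+1) : ℝ) : ℂ) := by push_cast; ring
    rw [e2, Complex.norm_real, Real.norm_eq_abs, abs_sub_comm,
      abs_of_nonneg (hJle n).1]
    exact mul_le_mul_of_nonneg_left (hJle n).2 (norm_nonneg _)
  rw [key]
  calc ‖(∫ s in (0:ℝ)..δ, (f s - P s) * E s) + (∫ s in δ..b, f s * E s)
        + ∑ n ∈ Finset.range (m+1),
            (a n * ((J n : ℂ) - ((n.factorial:ℝ) * x^(n+1) : ℝ)))‖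
      ≤ ‖(∫ s in (0:ℝ)..δ, (f s - P s) * E s) + (∫ s in δ..b, f s * E s)‖
        + ‖∑ n ∈ Finset.range (m+1),
            (a n * ((J n : ℂ) - ((n.factorial:ℝ) * x^(n+1) : ℝ)))‖ := norm_add_le _ _
    _ ≤ ‖∫ s in (0:ℝ)..δ, (f s - P s) * E s‖ + ‖∫ s in δ..b, f s * E s‖
        + ‖∑ n ∈ Finset.range (m+1),
            (a n * ((J n : ℂ) - ((n.factorial:ℝ) * x^(n+1) : ℝ)))‖ := by
        have := norm_add_le (∫ s in (0:ℝ)..δ, (f s - P s) * E s) (∫ s in δ..b, f s * E s)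
        linarith
    _ ≤ (C * A^m * q ^ (((m:ℝ)+1)*m/(2*κ))) * ((m+1).factorial * x^(m+2))
        + M * (b-δ) * Real.exp (-(δ/x))
        + ∑ n ∈ Finset.range (m+1), ‖a n‖
            * (Real.exp (-(δ/(2*x))) * (n.factorial * (2*x)^(n+1))) := by
        exact add_le_add (add_le_add hT1 hT2) hSum

lemma auxW_arith (q κ κ' b C A δ M Ca B K γ ε x : ℝ) (m : ℕ)
    (hq : 1 < q) (hκ : 0 < κ) (hκ'0 : 0 < κ') (hκ'κ : κ' < κ) (hb : 0 < b)
    (hC : 0 < C) (hA : 0 < A) (hδ : 0 < δ) (hδb : δ < b)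
    (hM0 : 0 ≤ M) (hCa0 : 0 < Ca)
    (hB1 : 1 ≤ B) (hAB : A ≤ B)
    (hεdef : ε = 1/(2*κ') - 1/(2*κ)) (hε : 0 < ε)
    (hγdef : γ = q ^ (ε/6)) (hγ : 1 < γ)
    (hK1 : 1 ≤ K)
    (hKlin : ∀ n:ℕ, (n:ℝ) ≤ K * γ^n)
    (hfactK : ∀ n:ℕ, (n.factorial : ℝ) ≤ K^(n+1) * γ^(n*(n+1)))
    (a : ℕ → ℂ)
    (ha : ∀ n : ℕ, ‖a n‖ ≤ Ca * B ^ n * q ^ (((n:ℝ)+1) * n / (2*κ)))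
    (hx0 : 0 < x) (hxδ : x ≤ δ) (hx1 : x ≤ 1) :
    (C * A^m * q ^ (((m:ℝ)+1)*m/(2*κ))) * ((m+1).factorial * x^(m+2))
        + M * (b-δ) * Real.exp (-(δ/x))
        + ∑ n ∈ Finset.range (m+1), ‖a n‖
            * (Real.exp (-(δ/(2*x))) * (n.factorial * (2*x)^(n+1)))
      ≤ (C + M*(b-δ)*K + Ca*K^3 + 1) * (B*K + K/δ + 4*K^2*B/δ + 1) ^ (m+1+1)
          * q ^ ((((m+1:ℕ):ℝ) + 1) * ((m+1:ℕ):ℝ) / (2 * κ')) * x ^ (m+1+1) := by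
  have hq0 : (0:ℝ) < q := lt_trans one_pos hq
  have hγ0 : (0:ℝ) < γ := lt_trans one_pos hγ
  have hK0 : (0:ℝ) < K := lt_of_lt_of_le one_pos hK1
  have hB0 : (0:ℝ) < B := lt_of_lt_of_le one_pos hB1
  have hbδ : (0:ℝ) < b - δ := by linarith
  set Q : ℝ := q ^ (((m:ℝ)+1+1)*((m:ℝ)+1)/(2*κ)) with hQdef
  set G : ℝ := γ ^ (6*((m+1)*(m+2))) with hGdef
  have hQ0 : 0 < Q := Real.rpow_pos_of_pos hq0 _
  have hQ1 : 1 ≤ Q := by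
    rw [hQdef, show (1:ℝ) = q ^ (0:ℝ) by rw [Real.rpow_zero]]
    apply Real.rpow_le_rpow_of_exponent_le hq.le
    have : (0:ℝ) ≤ (m:ℝ) := Nat.cast_nonneg m
    positivity
  have hG0 : 0 < G := by positivity
  have hG1 : 1 ≤ G := one_le_pow₀ hγ.le
  -- rpow decomposition
  have hQQ' : Q * G = q ^ ((((m+1:ℕ):ℝ) + 1) * ((m+1:ℕ):ℝ) / (2 * κ')) := by
    rw [hQdef, hGdef, hγdef, ← Real.rpow_natCast (q ^ (ε/6)) (6*((m+1)*(m+2))),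
      ← Real.rpow_mul hq0.le, ← Real.rpow_add hq0]
    congr 1
    rw [hεdef]
    push_cast
    field_simp
    ring
  -- factor bounds
  have hfact1 : ((m+1).factorial : ℝ) ≤ K^(m+2) * G := by
    refine (hfactK (m+1)).trans ?_
    rw [hGdef]
    have h2 : γ^((m+1)*(m+1+1)) ≤ γ^(6*((m+1)*(m+2))) :=
      pow_le_pow_right₀ hγ.le (by nlinarith)
    have h3 : K^(m+1+1) = K^(m+2) := by norm_num
    rw [h3]
    exact mul_le_mul_of_nonneg_left h2 (by positivity)
  have hfact2 : ((m+2).factorial : ℝ) ≤ K * K^(m+2) * γ^(3*((m+1)*(m+2))) := by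
    refine (hfactK (m+2)).trans ?_
    have h1 : K^(m+2+1) = K * K^(m+2) := by ring
    rw [h1]
    apply mul_le_mul_of_nonneg_left _ (by positivity)
    apply pow_le_pow_right₀ hγ.le
    nlinarith
  -- exp bounds
  have hexp1 : Real.exp (-(δ/x)) ≤ ((m+2).factorial : ℝ) * (x/δ)^(m+2) := by
    have := auxW_expbound (u := δ/x) (by positivity) (m+2)
    rwa [one_div_div] at this
  have hexp2 : Real.exp (-(δ/(2*x))) ≤ ((m+2).factorial : ℝ) * (2*x/δ)^(m+2) := by
    have := auxW_expbound (u := δ/(2*x)) (by positivity) (m+2)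
    rwa [one_div_div] at this
  -- Term 1
  set em : ℝ := ((m:ℝ)+1)*m/(2*κ) with hemdef
  have hqem : q ^ em ≤ Q := by
    rw [hQdef]
    apply Real.rpow_le_rpow_of_exponent_le hq.le
    rw [hemdef]
    have hm0 : (0:ℝ) ≤ (m:ℝ) := Nat.cast_nonneg m
    apply div_le_div_of_nonneg_right ?_ (by linarith)
    nlinarith
  have hqem0 : (0:ℝ) < q ^ em := Real.rpow_pos_of_pos hq0 _
  have hT1f : (C * A^m * q ^ em) * (((m+1).factorial:ℝ) * x^(m+2))
      ≤ C * (B*K)^(m+2) * (Q*G) * x^(m+2) := by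
    have e1 : A^m ≤ B^(m+2) :=
      (pow_le_pow_left₀ hA.le hAB m).trans (pow_le_pow_right₀ hB1 (by omega))
    have h := mul_le_mul (mul_le_mul e1 hqem hqem0.le (by positivity)) hfact1
      (by positivity) (by positivity)
    calc (C * A^m * q ^ em) * (((m+1).factorial:ℝ) * x^(m+2))
        = C * (A^m * q^em * ((m+1).factorial:ℝ)) * x^(m+2) := by ring
      _ ≤ C * (B^(m+2) * Q * (K^(m+2)*G)) * x^(m+2) := by
          apply mul_le_mul_of_nonneg_right (mul_le_mul_of_nonneg_left h hC.le) (by positivity)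
      _ = C * (B*K)^(m+2) * (Q*G) * x^(m+2) := by ring
  -- Term 2
  have eγ3 : γ^(3*((m+1)*(m+2))) ≤ G := by
    rw [hGdef]; exact pow_le_pow_right₀ hγ.le (by nlinarith)
  have hT2f : M * (b-δ) * Real.exp (-(δ/x))
      ≤ (M*(b-δ)*K) * (K/δ)^(m+2) * (Q*G) * x^(m+2) := by
    have hexp1' : Real.exp (-(δ/x)) ≤ K * K^(m+2) * G * (x/δ)^(m+2) := by
      refine hexp1.trans ?_
      have h2 : ((m+2).factorial:ℝ) ≤ K * K^(m+2) * G :=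
        hfact2.trans (mul_le_mul_of_nonneg_left eγ3 (by positivity))
      exact mul_le_mul_of_nonneg_right h2 (by positivity)
    have step : M * (b-δ) * Real.exp (-(δ/x))
        ≤ M * (b-δ) * (K * K^(m+2) * G * (x/δ)^(m+2)) :=
      mul_le_mul_of_nonneg_left hexp1' (by positivity)
    refine step.trans ?_
    have e0 : M * (b-δ) * (K * K^(m+2) * G * (x/δ)^(m+2))
        = (M*(b-δ)*K) * (K/δ)^(m+2) * G * x^(m+2) := by
      rw [div_pow, div_pow]; field_simp
    rw [e0]
    have : (M*(b-δ)*K) * (K/δ)^(m+2) * G * x^(m+2)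
        = ((M*(b-δ)*K) * (K/δ)^(m+2) * x^(m+2) * G) * 1 := by ring
    rw [this]
    calc ((M*(b-δ)*K) * (K/δ)^(m+2) * x^(m+2) * G) * 1
        ≤ ((M*(b-δ)*K) * (K/δ)^(m+2) * x^(m+2) * G) * Q := by
          apply mul_le_mul_of_nonneg_left (le_trans (by norm_num) hQ1) (by positivity)
      _ = (M*(b-δ)*K) * (K/δ)^(m+2) * (Q*G) * x^(m+2) := by ring
  -- Term 3
  set e2x : ℝ := Real.exp (-(δ/(2*x))) with he2xdef
  have he2x0 : 0 < e2x := Real.exp_pos _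
  set S : ℝ := Ca * B^(m+1) * Q * (((m+1).factorial:ℝ) * 2^(m+2)) * e2x with hSdef
  have hS0 : 0 ≤ S := by positivity
  have hper : ∀ n ∈ Finset.range (m+1),
      ‖a n‖ * (e2x * ((n.factorial:ℝ) * (2*x)^(n+1))) ≤ S := by
    intro n hn
    have hnm : n ≤ m := by
      have := Finset.mem_range.1 hn; omega
    have hnm' : (n:ℝ) ≤ (m:ℝ) := Nat.cast_le.2 hnm
    have c1 : ‖a n‖ ≤ Ca * B^(m+1) * Q := by
      refine (ha n).trans ?_
      have b1 : B^n ≤ B^(m+1) := pow_le_pow_right₀ hB1 (by omega)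
      have b2 : q ^ (((n:ℝ)+1) * n / (2*κ)) ≤ Q := by
        rw [hQdef]
        apply Real.rpow_le_rpow_of_exponent_le hq.le
        have hn0 : (0:ℝ) ≤ (n:ℝ) := Nat.cast_nonneg n
        apply div_le_div_of_nonneg_right ?_ (by linarith)
        nlinarith
      have := mul_le_mul b1 b2 (Real.rpow_pos_of_pos hq0 _).le (by positivity)
      calc Ca * B^n * q ^ (((n:ℝ)+1) * n / (2*κ))
          = Ca * (B^n * q ^ (((n:ℝ)+1) * n / (2*κ))) := by ring
        _ ≤ Ca * (B^(m+1) * Q) := mul_le_mul_of_nonneg_left this hCa0.le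
        _ = Ca * B^(m+1) * Q := by ring
    have c2 : (n.factorial:ℝ) ≤ ((m+1).factorial:ℝ) :=
      Nat.cast_le.2 (Nat.factorial_le (by omega))
    have c3 : (2*x)^(n+1) ≤ 2^(m+2) := by
      have hxp : x^(n+1) ≤ 1 := pow_le_one₀ hx0.le hx1
      calc (2*x)^(n+1) = 2^(n+1) * x^(n+1) := mul_pow 2 x (n+1)
        _ ≤ 2^(n+1) * 1 := mul_le_mul_of_nonneg_left hxp (by positivity)
        _ ≤ 2^(m+2) := by rw [mul_one]; exact pow_le_pow_right₀ one_le_two (by omega)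
    have c23 : (n.factorial:ℝ) * (2*x)^(n+1) ≤ ((m+1).factorial:ℝ) * 2^(m+2) :=
      mul_le_mul c2 c3 (by positivity) (by positivity)
    calc ‖a n‖ * (e2x * ((n.factorial:ℝ) * (2*x)^(n+1)))
        ≤ (Ca * B^(m+1) * Q) * (e2x * (((m+1).factorial:ℝ) * 2^(m+2))) := by
          apply mul_le_mul c1 (mul_le_mul_of_nonneg_left c23 he2x0.le)
            (by positivity) (by positivity)
      _ = S := by rw [hSdef]; ring
  have hsum : ∑ n ∈ Finset.range (m+1), ‖a n‖ * (e2x * ((n.factorial:ℝ) * (2*x)^(n+1)))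
      ≤ ((m+1:ℕ):ℝ) * S := by
    have := Finset.sum_le_card_nsmul (Finset.range (m+1)) _ S hper
    rwa [Finset.card_range, nsmul_eq_mul] at this
  have hfact1' : ((m+1).factorial:ℝ) ≤ K^(m+2) * γ^((m+1)*(m+2)) := by
    have := hfactK (m+1)
    have e : (m+1)*(m+1+1) = (m+1)*(m+2) := by ring
    have e' : m+1+1 = m+2 := by ring
    rwa [e, e'] at this
  have hexp2' : e2x ≤ (K * K^(m+2) * γ^(3*((m+1)*(m+2)))) * ((2*x/δ)^(m+2)) := by
    refine hexp2.trans (mul_le_mul_of_nonneg_right hfact2 (by positivity))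
  have hT3f : ∑ n ∈ Finset.range (m+1), ‖a n‖ * (e2x * ((n.factorial:ℝ) * (2*x)^(n+1)))
      ≤ (Ca*K^3) * (4*K^2*B/δ)^(m+2) * (Q*G) * x^(m+2) := by
    refine hsum.trans ?_
    have hKl : ((m+1:ℕ):ℝ) ≤ K * γ^(m+1) := hKlin (m+1)
    calc ((m+1:ℕ):ℝ) * S ≤ (K * γ^(m+1)) * S :=
          mul_le_mul_of_nonneg_right hKl hS0
      _ = (K * γ^(m+1)) * (Ca * B^(m+1) * Q * (((m+1).factorial:ℝ) * 2^(m+2))) * e2x := by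
          rw [hSdef]; ring
      _ ≤ (K * γ^(m+1)) * (Ca * B^(m+1) * Q * ((K^(m+2) * γ^((m+1)*(m+2))) * 2^(m+2)))
            * ((K * K^(m+2) * γ^(3*((m+1)*(m+2)))) * ((2*x/δ)^(m+2))) := by
          apply mul_le_mul
          · apply mul_le_mul_of_nonneg_left _ (by positivity)
            apply mul_le_mul_of_nonneg_left _ (by positivity)
            exact mul_le_mul_of_nonneg_right hfact1' (by positivity)
          · exact hexp2'
          · exact he2x0.le
          · positivity
      _ = (Ca * (K^2 * (K^(m+2)*K^(m+2))) * B^(m+1)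
            * (γ^(m+1) * γ^((m+1)*(m+2)) * γ^(3*((m+1)*(m+2))))
            * (2^(m+2) * (2*x/δ)^(m+2))) * Q := by ring
      _ ≤ (Ca * (K^3 * (K^(m+2)*K^(m+2))) * B^(m+2)
            * γ^(6*((m+1)*(m+2)))
            * (2^(m+2) * (2*x/δ)^(m+2))) * Q := by
          apply mul_le_mul_of_nonneg_right _ hQ0.le
          have g1 : K^2 ≤ K^3 := pow_le_pow_right₀ hK1 (by omega)
          have g2 : B^(m+1) ≤ B^(m+2) := pow_le_pow_right₀ hB1 (by omega)
          have g3 : γ^(m+1) * γ^((m+1)*(m+2)) * γ^(3*((m+1)*(m+2)))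
              ≤ γ^(6*((m+1)*(m+2))) := by
            rw [← pow_add, ← pow_add]
            exact pow_le_pow_right₀ hγ.le (by nlinarith)
          have h1 : Ca * (K^2 * (K^(m+2)*K^(m+2))) ≤ Ca * (K^3 * (K^(m+2)*K^(m+2))) := by
            apply mul_le_mul_of_nonneg_left _ hCa0.le
            exact mul_le_mul_of_nonneg_right g1 (by positivity)
          have h2 := mul_le_mul h1 g2 (by positivity) (by positivity)
          have h3 := mul_le_mul h2 g3 (by positivity) (by positivity)
          exact mul_le_mul_of_nonneg_right h3 (by positivity)
      _ = (Ca*K^3) * (4*K^2*B/δ)^(m+2) * (Q*G) * x^(m+2) := by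
          rw [hGdef, ← mul_pow 2 (2*x/δ) (m+2), show (2:ℝ)*(2*x/δ) = 4*x/δ by ring]
          ring
  -- combine
  have hA'base1 : B*K ≤ B*K + K/δ + 4*K^2*B/δ + 1 := by
    have h1 : 0 < K/δ := by positivity
    have h2 : 0 < 4*K^2*B/δ := by positivity
    linarith
  have hA'base2 : K/δ ≤ B*K + K/δ + 4*K^2*B/δ + 1 := by
    have h1 : 0 < B*K := by positivity
    have h2 : 0 < 4*K^2*B/δ := by positivity
    linarith
  have hA'base3 : 4*K^2*B/δ ≤ B*K + K/δ + 4*K^2*B/δ + 1 := by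
    have h1 : 0 < B*K := by positivity
    have h2 : 0 < K/δ := by positivity
    linarith
  set A' : ℝ := B*K + K/δ + 4*K^2*B/δ + 1 with hA'def
  have hA'0 : 0 < A' := by positivity
  have hp1 : (B*K)^(m+2) ≤ A'^(m+2) := pow_le_pow_left₀ (by positivity) hA'base1 _
  have hp2 : (K/δ)^(m+2) ≤ A'^(m+2) := pow_le_pow_left₀ (by positivity) hA'base2 _
  have hp3 : (4*K^2*B/δ)^(m+2) ≤ A'^(m+2) := pow_le_pow_left₀ (by positivity) hA'base3 _
  have hQG0 : 0 ≤ (Q*G) * x^(m+2) := by positivity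
  have t1 : C * (B*K)^(m+2) * (Q*G) * x^(m+2) ≤ C * A'^(m+2) * (Q*G) * x^(m+2) := by
    have := mul_le_mul_of_nonneg_right (mul_le_mul_of_nonneg_left hp1 hC.le) hQG0
    calc C * (B*K)^(m+2) * (Q*G) * x^(m+2) = C * (B*K)^(m+2) * ((Q*G) * x^(m+2)) := by ring
      _ ≤ C * A'^(m+2) * ((Q*G) * x^(m+2)) := this
      _ = C * A'^(m+2) * (Q*G) * x^(m+2) := by ring
  have t2 : (M*(b-δ)*K) * (K/δ)^(m+2) * (Q*G) * x^(m+2)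
      ≤ (M*(b-δ)*K) * A'^(m+2) * (Q*G) * x^(m+2) := by
    have := mul_le_mul_of_nonneg_right
      (mul_le_mul_of_nonneg_left hp2 (by positivity : (0:ℝ) ≤ M*(b-δ)*K)) hQG0
    calc (M*(b-δ)*K) * (K/δ)^(m+2) * (Q*G) * x^(m+2)
        = (M*(b-δ)*K) * (K/δ)^(m+2) * ((Q*G) * x^(m+2)) := by ring
      _ ≤ (M*(b-δ)*K) * A'^(m+2) * ((Q*G) * x^(m+2)) := this
      _ = (M*(b-δ)*K) * A'^(m+2) * (Q*G) * x^(m+2) := by ring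
  have t3 : (Ca*K^3) * (4*K^2*B/δ)^(m+2) * (Q*G) * x^(m+2)
      ≤ (Ca*K^3) * A'^(m+2) * (Q*G) * x^(m+2) := by
    have := mul_le_mul_of_nonneg_right
      (mul_le_mul_of_nonneg_left hp3 (by positivity : (0:ℝ) ≤ Ca*K^3)) hQG0
    calc (Ca*K^3) * (4*K^2*B/δ)^(m+2) * (Q*G) * x^(m+2)
        = (Ca*K^3) * (4*K^2*B/δ)^(m+2) * ((Q*G) * x^(m+2)) := by ring
      _ ≤ (Ca*K^3) * A'^(m+2) * ((Q*G) * x^(m+2)) := this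
      _ = (Ca*K^3) * A'^(m+2) * (Q*G) * x^(m+2) := by ring
  have hfinal : (C + M*(b-δ)*K + Ca*K^3) * A'^(m+2) * (Q*G) * x^(m+2)
      ≤ (C + M*(b-δ)*K + Ca*K^3 + 1) * A'^(m+2) * (Q*G) * x^(m+2) := by
    apply mul_le_mul_of_nonneg_right _ (by positivity)
    apply mul_le_mul_of_nonneg_right _ (by positivity)
    apply mul_le_mul_of_nonneg_right _ (by positivity)
    linarith
  calc (C * A^m * q ^ em) * (((m+1).factorial:ℝ) * x^(m+2))
        + M * (b-δ) * Real.exp (-(δ/x))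
        + ∑ n ∈ Finset.range (m+1), ‖a n‖ * (e2x * ((n.factorial:ℝ) * (2*x)^(n+1)))
      ≤ C * (B*K)^(m+2) * (Q*G) * x^(m+2)
        + (M*(b-δ)*K) * (K/δ)^(m+2) * (Q*G) * x^(m+2)
        + (Ca*K^3) * (4*K^2*B/δ)^(m+2) * (Q*G) * x^(m+2) :=
        add_le_add (add_le_add hT1f hT2f) hT3f
    _ ≤ C * A'^(m+2) * (Q*G) * x^(m+2)
        + (M*(b-δ)*K) * A'^(m+2) * (Q*G) * x^(m+2)
        + (Ca*K^3) * A'^(m+2) * (Q*G) * x^(m+2) := add_le_add (add_le_add t1 t2) t3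
    _ = (C + M*(b-δ)*K + Ca*K^3) * A'^(m+2) * (Q*G) * x^(m+2) := by ring
    _ ≤ (C + M*(b-δ)*K + Ca*K^3 + 1) * A'^(m+2) * (Q*G) * x^(m+2) := hfinal
    _ = (C + M*(b-δ)*K + Ca*K^3 + 1) * A'^(m+1+1)
          * q ^ ((((m+1:ℕ):ℝ) + 1) * ((m+1:ℕ):ℝ) / (2 * κ')) * x^(m+1+1) := by
        rw [← hQQ']



/- Statement 13: q-Gevrey Watson lemma. -/

theorem stmt_13 (q κ b : ℝ) (hq : 1 < q) (hκ : 0 < κ) (hb : 0 < b)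
    (f : ℝ → ℂ) (hf : ContinuousOn f (Set.Icc 0 b))
    (a : ℕ → ℂ) (C A δ : ℝ) (hC : 0 < C) (hA : 0 < A) (hδ : 0 < δ) (hδb : δ < b)
    (hasymp : ∀ N : ℕ, ∀ t ∈ Set.Icc (0:ℝ) δ,
      ‖f t - ∑ n ∈ Finset.range (N + 1), a n * (t : ℂ) ^ n‖
        ≤ C * A ^ N * q ^ (((N : ℝ) + 1) * N / (2 * κ)) * |t| ^ (N + 1)) :
    ∀ κ' : ℝ, 0 < κ' → κ' < κ →
      ∃ C' A' δ' : ℝ, 0 < C' ∧ 0 < A' ∧ 0 < δ' ∧ δ' < b ∧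
        ∀ N : ℕ, 1 ≤ N → ∀ x ∈ Set.Ioc (0:ℝ) δ',
          ‖(∫ s in (0:ℝ)..b, f s * Complex.exp (-(s / x : ℝ)))
              - ∑ n ∈ Finset.range N, a n * (n.factorial : ℂ) * (x : ℂ) ^ (n + 1)‖
            ≤ C' * A' ^ (N + 1) * q ^ (((N : ℝ) + 1) * N / (2 * κ')) * x ^ (N + 1) := by
  intro κ' hκ'0 hκ'κ
  have hq0 : (0:ℝ) < q := lt_trans one_pos hq
  obtain ⟨M, hM⟩ := isCompact_Icc.exists_bound_of_continuousOn hf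
  have hM0 : 0 ≤ M := le_trans (norm_nonneg (f 0)) (hM 0 ⟨le_rfl, hb.le⟩)
  set B := max A 1 with hB
  have hB1 : 1 ≤ B := le_max_right A 1
  have hB0 : 0 < B := lt_of_lt_of_le one_pos hB1
  have hAB : A ≤ B := le_max_left A 1
  set Ca := ‖f δ‖ + C * δ + C with hCadef
  have hCa0 : 0 < Ca := by positivity
  -- coefficient bound
  have ha : ∀ n : ℕ, ‖a n‖ ≤ Ca * B ^ n * q ^ (((n:ℝ)+1) * n / (2*κ)) :=
    auxW_coeff q κ b hq hκ hb f a C A δ hC hA hδ hδb hasymp B hB1 hAB hq0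
  -- gevrey gap
  set ε : ℝ := 1/(2*κ') - 1/(2*κ) with hεdef
  have hε : 0 < ε := by
    have : 1/(2*κ) < 1/(2*κ') := by
      apply one_div_lt_one_div_of_lt (by linarith) (by linarith)
    simp only [hεdef]; linarith
  set γ : ℝ := q ^ (ε/6) with hγdef
  have hγ : 1 < γ := Real.one_lt_rpow_iff_of_pos hq0 |>.2 (Or.inl ⟨hq, by positivity⟩)
  have hγ0 : (0:ℝ) < γ := lt_trans one_pos hγ
  set K : ℝ := max (1/(γ-1)) 1 with hKdef
  have hK1 : 1 ≤ K := le_max_right _ 1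
  have hK0 : 0 < K := lt_of_lt_of_le one_pos hK1
  have hKlin : ∀ n:ℕ, (n:ℝ) ≤ K * γ^n := fun n =>
    (auxW_lin hγ n).trans (mul_le_mul_of_nonneg_right (le_max_left _ 1) (by positivity))
  have hfactK : ∀ n:ℕ, (n.factorial : ℝ) ≤ K^(n+1) * γ^(n*(n+1)) := auxW_fact hγ hK1 hKlin
  have hbδ : (0:ℝ) < b - δ := by linarith
  refine ⟨C + M*(b-δ)*K + Ca*K^3 + 1, B*K + K/δ + 4*K^2*B/δ + 1, min δ 1, ?_, ?_, ?_, ?_, ?_⟩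
  · have h1 : 0 ≤ M*(b-δ)*K := by positivity
    have h2 : 0 < Ca*K^3 := by positivity
    linarith
  · positivity
  · exact lt_min hδ one_pos
  · exact lt_of_le_of_lt (min_le_left _ _) hδb
  intro N hN x hx
  obtain ⟨hx0, hxδ'⟩ := hx
  have hxδ : x ≤ δ := hxδ'.trans (min_le_left _ _)
  have hx1 : x ≤ 1 := hxδ'.trans (min_le_right _ _)
  obtain ⟨m, rfl⟩ : ∃ m, N = m + 1 := ⟨N - 1, by omega⟩
  refine le_trans
    (auxW_core q κ b hq hκ hb f hf a C A δ hC hA hδ hδb hasymp M hM hM0 x hx0 hxδ hx1 m)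
    (auxW_arith q κ κ' b C A δ M Ca B K γ ε x m hq hκ hκ'0 hκ'κ hb hC hA hδ hδb hM0 hCa0
      hB1 hAB hεdef hε hγdef hγ hK1 hKlin hfactK a ha hx0 hxδ hx1)
end
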